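/- arXiv:2205.07644 — 3 statements merged into one kernel-verified Lean document; each statement's English description precedes it below -/
import Mathlib

section
/- Let D be an additive category, S a multiplicative system in D, and E : Dᵒᵖ × D → Ab an additive bifunctor. For objects A, C of D, consider triplets (t, δ, s) where t : Z ⇒ C lies in S, s : A ⇒ X lies in S, and δ ∈ E(Z, X). Define (t₁, δ₁, s₁) ∼ (t₂, δ₂, s₂) if for some common denominator — i.e., morphisms s ∈ S(A, X), t ∈ S(Z, C), u_i ∈ S(X_i, X), v_i ∈ S(Z, Z_i) with s = u_i ∘ s_i and t = t_i ∘ v_i — one has v₁*(u₁)_*δ₁ = v₂*(u₂)_*δ₂ in E(Z, X). Then this relation is independent of the choice of common denominator and is an equivalence relation. -/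
open CategoryTheory

universe v u

/-- An additive bifunctor `E : Dᵒᵖ × D ⥤ Ab`, given by its action on objects
(valued in abelian groups), pushforward along morphisms in the covariant
(second) variable and pullback along morphisms in the contravariant (first)
variable. -/
structure AddBifunctor (C : Type u) [Category.{v} C] [Preadditive C] where
  E : C → C → AddCommGrpCat.{v}
  push : ∀ {Z X X' : C}, (X ⟶ X') → E Z X → E Z X'
  pull : ∀ {Z' Z X : C}, (Z' ⟶ Z) → E Z X → E Z' X
  push_id : ∀ {Z X : C} (δ : E Z X), push (𝟙 X) δ = δ
  push_comp : ∀ {Z X X' X'' : C} (f : X ⟶ X') (g : X' ⟶ X'') (δ : E Z X),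
      push (f ≫ g) δ = push g (push f δ)
  pull_id : ∀ {Z X : C} (δ : E Z X), pull (𝟙 Z) δ = δ
  pull_comp : ∀ {Z'' Z' Z X : C} (g : Z'' ⟶ Z') (f : Z' ⟶ Z) (δ : E Z X),
      pull (g ≫ f) δ = pull g (pull f δ)
  pull_push : ∀ {Z' Z X X' : C} (c : Z' ⟶ Z) (a : X ⟶ X') (δ : E Z X),
      pull c (push a δ) = push a (pull c δ)
  push_add : ∀ {Z X X' : C} (a : X ⟶ X') (δ δ' : E Z X),
      push a (δ + δ') = push a δ + push a δ'
  pull_add : ∀ {Z' Z X : C} (c : Z' ⟶ Z) (δ δ' : E Z X),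
      pull c (δ + δ') = pull c δ + pull c δ'
  push_add_hom : ∀ {Z X X' : C} (a a' : X ⟶ X') (δ : E Z X),
      push (a + a') δ = push a δ + push a' δ
  pull_add_hom : ∀ {Z' Z X : C} (c c' : Z' ⟶ Z) (δ : E Z X),
      pull (c + c') δ = pull c δ + pull c' δ

/-- 2-out-of-3 property for a class of morphisms. -/
def TwoOutOfThree {D : Type u} [Category.{v} D] (S : MorphismProperty D) : Prop :=
  (∀ {X Y Z : D} (f : X ⟶ Y) (g : Y ⟶ Z), S f → S g → S (f ≫ g)) ∧
  (∀ {X Y Z : D} (f : X ⟶ Y) (g : Y ⟶ Z), S f → S (f ≫ g) → S g) ∧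
  (∀ {X Y Z : D} (f : X ⟶ Y) (g : Y ⟶ Z), S g → S (f ≫ g) → S f)

variable {D : Type u} [Category.{v} D] [Preadditive D]

/-- A triplet `(C ⇐t Z ⇢δ X ⇐s A)` representing an element of `Ẽ(C, A)`:
morphisms `t : Z ⟶ C` and `s : A ⟶ X` in `S` together with an extension
`δ ∈ E(Z, X)`. -/
structure Triplet (S : MorphismProperty D) (T : AddBifunctor D) (Cc A : D) where
  Z : D
  X : D
  t : Z ⟶ Cc
  s : A ⟶ X
  ht : S t
  hs : S s
  δ : T.E Z X

/-- Two triplets are equivalent if for some common denominator the pulled–pushed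
extensions agree. -/
def TripletRel (S : MorphismProperty D) (T : AddBifunctor D) (Cc A : D)
    (T₁ T₂ : Triplet S T Cc A) : Prop :=
  ∃ (Z X : D) (t : Z ⟶ Cc) (s : A ⟶ X) (u₁ : T₁.X ⟶ X) (v₁ : Z ⟶ T₁.Z)
    (u₂ : T₂.X ⟶ X) (v₂ : Z ⟶ T₂.Z),
    S t ∧ S s ∧ S u₁ ∧ S v₁ ∧ S u₂ ∧ S v₂ ∧
    s = T₁.s ≫ u₁ ∧ s = T₂.s ≫ u₂ ∧ t = v₁ ≫ T₁.t ∧ t = v₂ ≫ T₂.t ∧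
    T.pull v₁ (T.push u₁ T₁.δ) = T.pull v₂ (T.push u₂ T₂.δ)

namespace AddBifunctor

variable {T : AddBifunctor D}

lemma push_zero {Z X X' : D} (a : X ⟶ X') : T.push (Z := Z) a 0 = 0 := by
  have h := T.push_add a (0 : T.E Z X) 0
  rw [add_zero] at h
  exact left_eq_add.mp h

lemma pull_zero {Z' Z X : D} (c : Z' ⟶ Z) : T.pull (X := X) c 0 = 0 := by
  have h := T.pull_add c (0 : T.E Z X) 0
  rw [add_zero] at h
  exact left_eq_add.mp h

lemma push_sub {Z X X' : D} (a : X ⟶ X') (δ δ' : T.E Z X) :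
    T.push a (δ - δ') = T.push a δ - T.push a δ' := by
  have h0 : δ = (δ - δ') + δ' := by abel
  have h := T.push_add a (δ - δ') δ'
  rw [← h0] at h
  exact eq_sub_of_add_eq h.symm

lemma pull_sub {Z' Z X : D} (c : Z' ⟶ Z) (δ δ' : T.E Z X) :
    T.pull c (δ - δ') = T.pull c δ - T.pull c δ' := by
  have h0 : δ = (δ - δ') + δ' := by abel
  have h := T.pull_add c (δ - δ') δ'
  rw [← h0] at h
  exact eq_sub_of_add_eq h.symm

/-- `c*(x_* δ)` computed after composing on both sides. -/
lemma pull_push_comp {Q Z₁ Z X X₁ P : D} (x : Q ⟶ Z) (v : Z ⟶ Z₁) (u : X₁ ⟶ X)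
    (w : X ⟶ P) (δ : T.E Z₁ X₁) :
    T.pull (x ≫ v) (T.push (u ≫ w) δ) =
      T.pull x (T.push w (T.pull v (T.push u δ))) := by
  rw [T.pull_comp, T.push_comp, T.pull_push]

end AddBifunctor

/-- Left Ore: two morphisms in `S` with the same source can be completed to a
commutative square by morphisms in `S`. -/
lemma exists_left_square {S : MorphismProperty D} [S.HasLeftCalculusOfFractions]
    (h23 : TwoOutOfThree S) {X₀ X X' : D} (u : X₀ ⟶ X) (u' : X₀ ⟶ X')
    (hu : S u) (hu' : S u') :
    ∃ (P : D) (w : X ⟶ P) (w' : X' ⟶ P), S w ∧ S w' ∧ u ≫ w = u' ≫ w' := by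
  obtain ⟨ψ, fac⟩ := MorphismProperty.HasLeftCalculusOfFractions.exists_leftFraction
    (MorphismProperty.RightFraction.mk u hu u')
  -- fac : u' ≫ ψ.s = u ≫ ψ.f
  refine ⟨ψ.Y', ψ.f, ψ.s, ?_, ψ.hs, fac.symm⟩
  exact h23.2.1 u ψ.f hu (fac ▸ (h23.1 u' ψ.s hu' ψ.hs))

/-- Right Ore: two morphisms in `S` with the same target can be completed to a
commutative square by morphisms in `S`. -/
lemma exists_right_square {S : MorphismProperty D} [S.HasRightCalculusOfFractions]
    (h23 : TwoOutOfThree S) {Z Z' Z₀ : D} (v : Z ⟶ Z₀) (v' : Z' ⟶ Z₀)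
    (hv : S v) (hv' : S v') :
    ∃ (Q : D) (x : Q ⟶ Z) (x' : Q ⟶ Z'), S x ∧ S x' ∧ x ≫ v = x' ≫ v' := by
  obtain ⟨ψ, fac⟩ := MorphismProperty.HasRightCalculusOfFractions.exists_rightFraction
    (MorphismProperty.LeftFraction.mk v' v hv)
  -- fac : ψ.s ≫ v' = ψ.f ≫ v
  refine ⟨ψ.X', ψ.f, ψ.s, ?_, ψ.hs, fac.symm⟩
  exact h23.2.2 ψ.f v hv (fac ▸ (h23.1 ψ.s v' ψ.hs hv'))

/-- For a multiplicative system `S` satisfying 2-out-of-3 and an additive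
bifunctor `E` such that every extension killed by pulling–pushing along
morphisms of `S` vanishes, the common-denominator relation on triplets is
independent of the chosen common denominator, and it is an equivalence
relation. -/
theorem tripletRel_equivalence (S : MorphismProperty D)
    [S.HasLeftCalculusOfFractions] [S.HasRightCalculusOfFractions]
    (h23 : TwoOutOfThree S) (T : AddBifunctor D)
    (hsat : ∀ {Z' Z X X' : D} (u : X ⟶ X') (v : Z' ⟶ Z) (δ : T.E Z X),
      S u → S v → T.pull v (T.push u δ) = 0 → δ = 0)
    (Cc A : D) :
    Equivalence (TripletRel S T Cc A) ∧
    ∀ T₁ T₂ : Triplet S T Cc A, TripletRel S T Cc A T₁ T₂ →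
      ∀ (Z X : D) (t : Z ⟶ Cc) (s : A ⟶ X) (u₁ : T₁.X ⟶ X) (v₁ : Z ⟶ T₁.Z)
        (u₂ : T₂.X ⟶ X) (v₂ : Z ⟶ T₂.Z),
        S t → S s → S u₁ → S v₁ → S u₂ → S v₂ →
        s = T₁.s ≫ u₁ → s = T₂.s ≫ u₂ → t = v₁ ≫ T₁.t → t = v₂ ≫ T₂.t →
        T.pull v₁ (T.push u₁ T₁.δ) = T.pull v₂ (T.push u₂ T₂.δ) := by
  constructor
  · refine ⟨?_, ?_, ?_⟩
    · intro T₁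
      exact ⟨T₁.Z, T₁.X, T₁.t, T₁.s, 𝟙 _, 𝟙 _, 𝟙 _, 𝟙 _, T₁.ht, T₁.hs,
        S.id_mem _, S.id_mem _, S.id_mem _, S.id_mem _,
        (Category.comp_id _).symm, (Category.comp_id _).symm,
        (Category.id_comp _).symm, (Category.id_comp _).symm, rfl⟩
    · rintro T₁ T₂ ⟨Z, X, t, s, u₁, v₁, u₂, v₂, ht, hs, hu₁, hv₁, hu₂, hv₂,
        e₁, e₂, f₁, f₂, hδ⟩
      exact ⟨Z, X, t, s, u₂, v₂, u₁, v₁, ht, hs, hu₂, hv₂, hu₁, hv₁,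
        e₂, e₁, f₂, f₁, hδ.symm⟩
    · rintro T₁ T₂ T₃ ⟨Z, X, t, s, u₁, v₁, u₂, v₂, ht, hs, hu₁, hv₁, hu₂, hv₂,
        e₁, e₂, f₁, f₂, hδ⟩
        ⟨Z', X', t', s', u₂', v₂', u₃, v₃, ht', hs', hu₂', hv₂', hu₃, hv₃,
        e₂', e₃, f₂', f₃, hδ'⟩
      obtain ⟨P, w, w', hw, hw', hww⟩ := exists_left_square h23 u₂ u₂' hu₂ hu₂'
      obtain ⟨Q, x, x', hx, hx', hxx⟩ := exists_right_square h23 v₂ v₂' hv₂ hv₂'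
      refine ⟨Q, P, x ≫ t, s ≫ w, u₁ ≫ w, x ≫ v₁, u₃ ≫ w', x' ≫ v₃,
        h23.1 _ _ hx ht, h23.1 _ _ hs hw, h23.1 _ _ hu₁ hw, h23.1 _ _ hx hv₁,
        h23.1 _ _ hu₃ hw', h23.1 _ _ hx' hv₃, ?_, ?_, ?_, ?_, ?_⟩
      · rw [e₁, Category.assoc]
      · calc s ≫ w = T₂.s ≫ (u₂ ≫ w) := by rw [e₂, Category.assoc]
          _ = T₂.s ≫ (u₂' ≫ w') := by rw [hww]
          _ = s' ≫ w' := by rw [e₂', Category.assoc]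
          _ = T₃.s ≫ (u₃ ≫ w') := by rw [e₃, Category.assoc]
      · rw [f₁, Category.assoc]
      · calc x ≫ t = (x ≫ v₂) ≫ T₂.t := by rw [f₂, Category.assoc]
          _ = (x' ≫ v₂') ≫ T₂.t := by rw [hxx]
          _ = x' ≫ t' := by rw [f₂', Category.assoc]
          _ = (x' ≫ v₃) ≫ T₃.t := by rw [f₃, Category.assoc]
      · calc T.pull (x ≫ v₁) (T.push (u₁ ≫ w) T₁.δ)
            = T.pull x (T.push w (T.pull v₁ (T.push u₁ T₁.δ))) :=
              T.pull_push_comp x v₁ u₁ w T₁.δ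
          _ = T.pull x (T.push w (T.pull v₂ (T.push u₂ T₂.δ))) := by rw [hδ]
          _ = T.pull (x ≫ v₂) (T.push (u₂ ≫ w) T₂.δ) :=
              (T.pull_push_comp x v₂ u₂ w T₂.δ).symm
          _ = T.pull (x' ≫ v₂') (T.push (u₂' ≫ w') T₂.δ) := by rw [hxx, hww]
          _ = T.pull x' (T.push w' (T.pull v₂' (T.push u₂' T₂.δ))) :=
              T.pull_push_comp x' v₂' u₂' w' T₂.δ
          _ = T.pull x' (T.push w' (T.pull v₃ (T.push u₃ T₃.δ))) := by rw [hδ']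
          _ = T.pull (x' ≫ v₃) (T.push (u₃ ≫ w') T₃.δ) :=
              (T.pull_push_comp x' v₃ u₃ w' T₃.δ).symm
  · rintro T₁ T₂ ⟨Z, X, t, s, u₁, v₁, u₂, v₂, ht, hs, hu₁, hv₁, hu₂, hv₂,
      e₁, e₂, f₁, f₂, hδ⟩ Z' X' t' s' u₁' v₁' u₂' v₂' ht' hs' hu₁' hv₁' hu₂' hv₂'
      e₁' e₂' f₁' f₂'
    -- common refinement on the `X` side
    obtain ⟨P, w, w', hw, hw', hww⟩ := exists_left_square h23 u₁ u₁' hu₁ hu₁'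
    have hpre : T₂.s ≫ (u₂ ≫ w) = T₂.s ≫ (u₂' ≫ w') := by
      calc T₂.s ≫ (u₂ ≫ w) = s ≫ w := by rw [e₂, Category.assoc]
        _ = T₁.s ≫ (u₁ ≫ w) := by rw [e₁, Category.assoc]
        _ = T₁.s ≫ (u₁' ≫ w') := by rw [hww]
        _ = s' ≫ w' := by rw [e₁', Category.assoc]
        _ = T₂.s ≫ (u₂' ≫ w') := by rw [e₂', Category.assoc]
    obtain ⟨P', r, hr, hrr⟩ :=
      MorphismProperty.HasLeftCalculusOfFractions.ext
        (u₂ ≫ w) (u₂' ≫ w') T₂.s T₂.hs hpre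
    -- common refinement on the `Z` side
    obtain ⟨Q, x, x', hx, hx', hxx⟩ := exists_right_square h23 v₁ v₁' hv₁ hv₁'
    have hpost : (x ≫ v₂) ≫ T₂.t = (x' ≫ v₂') ≫ T₂.t := by
      calc (x ≫ v₂) ≫ T₂.t = x ≫ t := by rw [f₂, Category.assoc]
        _ = (x ≫ v₁) ≫ T₁.t := by rw [f₁, Category.assoc]
        _ = (x' ≫ v₁') ≫ T₁.t := by rw [hxx]
        _ = x' ≫ t' := by rw [f₁', Category.assoc]
        _ = (x' ≫ v₂') ≫ T₂.t := by rw [f₂', Category.assoc]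
    obtain ⟨Q', r', hr', hrr'⟩ :=
      MorphismProperty.HasRightCalculusOfFractions.ext
        (x ≫ v₂) (x' ≫ v₂') T₂.t T₂.ht hpost
    -- final refining morphisms
    have hW1 : u₁ ≫ (w ≫ r) = u₁' ≫ (w' ≫ r) := by
      rw [← Category.assoc, ← Category.assoc, hww]
    have hW2 : u₂ ≫ (w ≫ r) = u₂' ≫ (w' ≫ r) := by
      rw [← Category.assoc, ← Category.assoc]; exact hrr
    have hX1 : (r' ≫ x) ≫ v₁ = (r' ≫ x') ≫ v₁' := by
      rw [Category.assoc, Category.assoc, hxx]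
    have hX2 : (r' ≫ x) ≫ v₂ = (r' ≫ x') ≫ v₂' := by
      rw [Category.assoc, Category.assoc]; exact hrr'
    have key : T.pull (r' ≫ x') (T.push (w' ≫ r)
        (T.pull v₁' (T.push u₁' T₁.δ) - T.pull v₂' (T.push u₂' T₂.δ))) = 0 := by
      rw [T.push_sub, T.pull_sub, sub_eq_zero]
      calc T.pull (r' ≫ x') (T.push (w' ≫ r) (T.pull v₁' (T.push u₁' T₁.δ)))
          = T.pull ((r' ≫ x') ≫ v₁') (T.push (u₁' ≫ (w' ≫ r)) T₁.δ) :=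
            (T.pull_push_comp _ v₁' u₁' _ T₁.δ).symm
        _ = T.pull ((r' ≫ x) ≫ v₁) (T.push (u₁ ≫ (w ≫ r)) T₁.δ) := by
            rw [hX1, hW1]
        _ = T.pull (r' ≫ x) (T.push (w ≫ r) (T.pull v₁ (T.push u₁ T₁.δ))) :=
            T.pull_push_comp _ v₁ u₁ _ T₁.δ
        _ = T.pull (r' ≫ x) (T.push (w ≫ r) (T.pull v₂ (T.push u₂ T₂.δ))) := by
            rw [hδ]
        _ = T.pull ((r' ≫ x) ≫ v₂) (T.push (u₂ ≫ (w ≫ r)) T₂.δ) :=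
            (T.pull_push_comp _ v₂ u₂ _ T₂.δ).symm
        _ = T.pull ((r' ≫ x') ≫ v₂') (T.push (u₂' ≫ (w' ≫ r)) T₂.δ) := by
            rw [hX2, hW2]
        _ = T.pull (r' ≫ x') (T.push (w' ≫ r) (T.pull v₂' (T.push u₂' T₂.δ))) :=
            T.pull_push_comp _ v₂' u₂' _ T₂.δ
    have := hsat (w' ≫ r) (r' ≫ x')
      (T.pull v₁' (T.push u₁' T₁.δ) - T.pull v₂' (T.push u₂' T₂.δ))
      (h23.1 _ _ hw' hr) (h23.1 _ _ hr' hx') key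
    exact sub_eq_zero.mp this
end

section
/- With D, S, E as above, for each pair of objects (C, A), the set Ẽ(C, A) of equivalence classes [t \ δ / s] of triplets under the common-denominator equivalence relation carries a natural abelian group structure: the sum of [t₁ \ δ₁ / s₁] and [t₂ \ δ₂ / s₂] is [t \ ρ₁ + ρ₂ / s], where (t, s) is any common denominator with [t_i \ δ_i / s_i] = [t \ ρ_i / s]; the zero element is [id \ 0 / id], and the inverse of [t \ δ / s] is [t \ −δ / s]. This addition is well defined (independent of the common denominator chosen). -/
open CategoryTheory

universe v u

variable {D : Type u} [Category.{v} D] [Preadditive D]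

section TildeEAux

variable {D : Type u} [Category.{v} D] [Preadditive D]

variable (T : AddBifunctor D)

lemma tpush_zero {Z X X' : D} (a : X ⟶ X') : T.push a (0 : T.E Z X) = 0 := by
  have h := T.push_add a (0 : T.E Z X) 0
  rw [add_zero] at h
  exact (left_eq_add.mp h)

lemma tpull_zero {Z' Z X : D} (c : Z' ⟶ Z) : T.pull c (0 : T.E Z X) = 0 := by
  have h := T.pull_add c (0 : T.E Z X) 0
  rw [add_zero] at h
  exact (left_eq_add.mp h)

lemma tpush_neg {Z X X' : D} (a : X ⟶ X') (δ : T.E Z X) :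
    T.push a (-δ) = -(T.push a δ) := by
  have h := T.push_add a δ (-δ)
  rw [add_neg_cancel, tpush_zero T a] at h
  exact eq_neg_of_add_eq_zero_right h.symm

lemma tpull_neg {Z' Z X : D} (c : Z' ⟶ Z) (δ : T.E Z X) :
    T.pull c (-δ) = -(T.pull c δ) := by
  have h := T.pull_add c δ (-δ)
  rw [add_neg_cancel, tpull_zero T c] at h
  exact eq_neg_of_add_eq_zero_right h.symm

lemma tsh {Z₂ Z₁ Z X X₁ X₂ : D} (w : Z₂ ⟶ Z₁) (v : Z₁ ⟶ Z) (u : X ⟶ X₁)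
    (x : X₁ ⟶ X₂) (δ : T.E Z X) :
    T.pull (w ≫ v) (T.push (u ≫ x) δ) =
      T.pull w (T.push x (T.pull v (T.push u δ))) := by
  rw [T.pull_comp, T.push_comp, T.pull_push]

variable (S : MorphismProperty D)

lemma oreRight [S.HasRightCalculusOfFractions] (h23 : TwoOutOfThree S)
    {Z₁ Z₂ Y : D} (t₁ : Z₁ ⟶ Y) (t₂ : Z₂ ⟶ Y) (h₁ : S t₁) (h₂ : S t₂) :
    ∃ (Z : D) (v₁ : Z ⟶ Z₁) (v₂ : Z ⟶ Z₂), S v₁ ∧ S v₂ ∧ v₁ ≫ t₁ = v₂ ≫ t₂ := by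
  obtain ⟨ψ, hψ⟩ :=
    (MorphismProperty.LeftFraction.mk t₁ t₂ h₂).exists_rightFraction
  exact ⟨ψ.X', ψ.s, ψ.f, ψ.hs, h23.2.2 ψ.f t₂ h₂ (hψ ▸ h23.1 ψ.s t₁ ψ.hs h₁), hψ⟩

lemma oreLeft [S.HasLeftCalculusOfFractions] (h23 : TwoOutOfThree S)
    {A' X₁ X₂ : D} (s₁ : A' ⟶ X₁) (s₂ : A' ⟶ X₂) (h₁ : S s₁) (h₂ : S s₂) :
    ∃ (X : D) (u₁ : X₁ ⟶ X) (u₂ : X₂ ⟶ X), S u₁ ∧ S u₂ ∧ s₁ ≫ u₁ = s₂ ≫ u₂ := by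
  obtain ⟨ψ, hψ⟩ :=
    (MorphismProperty.RightFraction.mk s₁ h₁ s₂).exists_leftFraction
  exact ⟨ψ.Y', ψ.f, ψ.s, h23.2.1 s₁ ψ.f h₁ (hψ ▸ h23.1 s₂ ψ.s h₂ ψ.hs), ψ.hs,
    hψ.symm⟩

variable {S} {Cc A : D}

/-- `P` is a common-denominator presentation of the sum of `T₁` and `T₂`. -/
def IsCD (T₁ T₂ P : Triplet S T Cc A) : Prop :=
  ∃ (v₁ : P.Z ⟶ T₁.Z) (v₂ : P.Z ⟶ T₂.Z) (u₁ : T₁.X ⟶ P.X) (u₂ : T₂.X ⟶ P.X),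
    S v₁ ∧ S v₂ ∧ S u₁ ∧ S u₂ ∧ P.t = v₁ ≫ T₁.t ∧ P.t = v₂ ≫ T₂.t ∧
    P.s = T₁.s ≫ u₁ ∧ P.s = T₂.s ≫ u₂ ∧
    P.δ = T.pull v₁ (T.push u₁ T₁.δ) + T.pull v₂ (T.push u₂ T₂.δ)

lemma isCD_exists [S.HasLeftCalculusOfFractions] [S.HasRightCalculusOfFractions]
    (h23 : TwoOutOfThree S) (T₁ T₂ : Triplet S T Cc A) :
    ∃ P, IsCD T T₁ T₂ P := by
  obtain ⟨Z, v₁, v₂, hv₁, hv₂, hv⟩ := oreRight S h23 T₁.t T₂.t T₁.ht T₂.ht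
  obtain ⟨X, u₁, u₂, hu₁, hu₂, hu⟩ := oreLeft S h23 T₁.s T₂.s T₁.hs T₂.hs
  exact ⟨⟨Z, X, v₁ ≫ T₁.t, T₁.s ≫ u₁, h23.1 _ _ hv₁ T₁.ht,
    h23.1 _ _ T₁.hs hu₁, T.pull v₁ (T.push u₁ T₁.δ) + T.pull v₂ (T.push u₂ T₂.δ)⟩,
    v₁, v₂, u₁, u₂, hv₁, hv₂, hu₁, hu₂, rfl, hv, rfl, hu, rfl⟩

lemma isCD_rel [S.HasLeftCalculusOfFractions] [S.HasRightCalculusOfFractions]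
    (h23 : TwoOutOfThree S) {T₁ T₂ P P' : Triplet S T Cc A}
    (h : IsCD T T₁ T₂ P) (h' : IsCD T T₁ T₂ P') : TripletRel S T Cc A P P' := by
  obtain ⟨v₁, v₂, u₁, u₂, hv₁, hv₂, hu₁, hu₂, ct₁, ct₂, cs₁, cs₂, hδ⟩ := h
  obtain ⟨v₁', v₂', u₁', u₂', hv₁', hv₂', hu₁', hu₂', ct₁', ct₂', cs₁', cs₂', hδ'⟩ := h'
  obtain ⟨Z₀, w, w', hw, hw', hww⟩ := oreRight S h23 P.t P'.t P.ht P'.ht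
  obtain ⟨X₀, x, x', hx, hx', hxx⟩ := oreLeft S h23 P.s P'.s P.hs P'.hs
  obtain ⟨Z₁, c₁, hc₁, hc₁e⟩ :=
    MorphismProperty.HasRightCalculusOfFractions.ext (W := S)
      (w ≫ v₁) (w' ≫ v₁') T₁.t T₁.ht (by
        rw [Category.assoc, Category.assoc, ← ct₁, ← ct₁', hww])
  obtain ⟨Z₂, c₂, hc₂, hc₂e⟩ :=
    MorphismProperty.HasRightCalculusOfFractions.ext (W := S)
      (w ≫ v₂) (w' ≫ v₂') T₂.t T₂.ht (by
        rw [Category.assoc, Category.assoc, ← ct₂, ← ct₂', hww])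
  obtain ⟨Zs, d₁, d₂, hd₁, hd₂, hdd⟩ := oreRight S h23 c₁ c₂ hc₁ hc₂
  obtain ⟨X₁, e₁, he₁, he₁e⟩ :=
    MorphismProperty.HasLeftCalculusOfFractions.ext (W := S)
      (u₁ ≫ x) (u₁' ≫ x') T₁.s T₁.hs (by
        rw [← Category.assoc, ← Category.assoc, ← cs₁, ← cs₁', hxx])
  obtain ⟨X₂, e₂, he₂, he₂e⟩ :=
    MorphismProperty.HasLeftCalculusOfFractions.ext (W := S)
      (u₂ ≫ x) (u₂' ≫ x') T₂.s T₂.hs (by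
        rw [← Category.assoc, ← Category.assoc, ← cs₂, ← cs₂', hxx])
  obtain ⟨Xs, f₁, f₂, hf₁, hf₂, hff⟩ := oreLeft S h23 e₁ e₂ he₁ he₂
  have mZ1 : ((d₁ ≫ c₁) ≫ w) ≫ v₁ = ((d₁ ≫ c₁) ≫ w') ≫ v₁' := by
    simp only [Category.assoc]
    rw [hc₁e]
  have mZ2 : ((d₁ ≫ c₁) ≫ w) ≫ v₂ = ((d₁ ≫ c₁) ≫ w') ≫ v₂' := by
    simp only [Category.assoc]
    rw [← Category.assoc d₁ c₁ (w ≫ v₂), hdd, Category.assoc d₂ c₂ (w ≫ v₂),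
      hc₂e, ← Category.assoc d₂ c₂ (w' ≫ v₂'), ← hdd,
      Category.assoc d₁ c₁ (w' ≫ v₂')]
  have mX1 : u₁ ≫ x ≫ e₁ ≫ f₁ = u₁' ≫ x' ≫ e₁ ≫ f₁ := by
    simp only [← Category.assoc]
    rw [he₁e]
  have mX2 : u₂ ≫ x ≫ e₁ ≫ f₁ = u₂' ≫ x' ≫ e₁ ≫ f₁ := by
    rw [hff]
    simp only [← Category.assoc]
    rw [he₂e]
  refine ⟨Zs, Xs, ((d₁ ≫ c₁) ≫ w) ≫ P.t, P.s ≫ (x ≫ e₁ ≫ f₁),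
    x ≫ e₁ ≫ f₁, (d₁ ≫ c₁) ≫ w, x' ≫ e₁ ≫ f₁, (d₁ ≫ c₁) ≫ w',
    h23.1 _ _ (h23.1 _ _ (h23.1 _ _ hd₁ hc₁) hw) P.ht,
    h23.1 _ _ P.hs (h23.1 _ _ hx (h23.1 _ _ he₁ hf₁)),
    h23.1 _ _ hx (h23.1 _ _ he₁ hf₁),
    h23.1 _ _ (h23.1 _ _ hd₁ hc₁) hw,
    h23.1 _ _ hx' (h23.1 _ _ he₁ hf₁),
    h23.1 _ _ (h23.1 _ _ hd₁ hc₁) hw',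
    rfl, ?_, rfl, ?_, ?_⟩
  · simp only [← Category.assoc]
    rw [hxx]
  · simp only [Category.assoc]
    rw [hww]
  · rw [hδ, hδ', T.push_add, T.pull_add, T.push_add, T.pull_add,
      ← tsh T, ← tsh T, ← tsh T, ← tsh T, mZ1, mZ2, mX1, mX2]

noncomputable def addT [S.HasLeftCalculusOfFractions]
    [S.HasRightCalculusOfFractions] (h23 : TwoOutOfThree S)
    (T₁ T₂ : Triplet S T Cc A) : Triplet S T Cc A :=
  (isCD_exists T h23 T₁ T₂).choose

lemma addT_isCD [S.HasLeftCalculusOfFractions] [S.HasRightCalculusOfFractions]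
    (h23 : TwoOutOfThree S) (T₁ T₂ : Triplet S T Cc A) :
    IsCD T T₁ T₂ (addT T h23 T₁ T₂) :=
  (isCD_exists T h23 T₁ T₂).choose_spec

lemma addT_eq [S.HasLeftCalculusOfFractions] [S.HasRightCalculusOfFractions]
    (h23 : TwoOutOfThree S) {T₁ T₂ P : Triplet S T Cc A}
    (hP : IsCD T T₁ T₂ P) :
    Quot.mk (TripletRel S T Cc A) (addT T h23 T₁ T₂) =
      Quot.mk (TripletRel S T Cc A) P :=
  Quot.sound (isCD_rel T h23 (addT_isCD T h23 T₁ T₂) hP)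

/-- Negation of a triplet. -/
def negT (P : Triplet S T Cc A) : Triplet S T Cc A :=
  ⟨P.Z, P.X, P.t, P.s, P.ht, P.hs, -P.δ⟩

lemma negT_rel {P P' : Triplet S T Cc A} (h : TripletRel S T Cc A P P') :
    TripletRel S T Cc A (negT T P) (negT T P') := by
  obtain ⟨Z, X, t, s, u₁, v₁, u₂, v₂, h1, h2, h3, h4, h5, h6, h7, h8, h9, h10, key⟩ := h
  exact ⟨Z, X, t, s, u₁, v₁, u₂, v₂, h1, h2, h3, h4, h5, h6, h7, h8, h9, h10, by
    show T.pull v₁ (T.push u₁ (-P.δ)) = T.pull v₂ (T.push u₂ (-P'.δ))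
    rw [tpush_neg, tpull_neg, tpush_neg, tpull_neg, key]⟩

end TildeEAux

/-- The set `Ẽ(C, A)` of equivalence classes of triplets carries an abelian
group structure: addition is computed via common denominators
(`[t\δ₁/s] + [t\δ₂/s] = [t\(δ₁+δ₂)/s]`), the zero element is `[id\0/id]` and
the inverse of `[t\δ/s]` is `[t\(-δ)/s]`. -/
theorem tildeE_addCommGroup (S : MorphismProperty D)
    [S.HasLeftCalculusOfFractions] [S.HasRightCalculusOfFractions]
    (h23 : TwoOutOfThree S) (T : AddBifunctor D)
    (hsat : ∀ {Z' Z X X' : D} (u : X ⟶ X') (v : Z' ⟶ Z) (δ : T.E Z X),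
      S u → S v → T.pull v (T.push u δ) = 0 → δ = 0)
    (Cc A : D) :
    ∃ (add : Quot (TripletRel S T Cc A) → Quot (TripletRel S T Cc A) →
        Quot (TripletRel S T Cc A))
      (zero : Quot (TripletRel S T Cc A))
      (neg : Quot (TripletRel S T Cc A) → Quot (TripletRel S T Cc A)),
      (∀ x y z, add (add x y) z = add x (add y z)) ∧
      (∀ x y, add x y = add y x) ∧
      (∀ x, add zero x = x) ∧
      (∀ x, add (neg x) x = zero) ∧
      zero = Quot.mk _ ⟨Cc, A, 𝟙 Cc, 𝟙 A, S.id_mem Cc, S.id_mem A, 0⟩ ∧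
      (∀ (Z X : D) (t : Z ⟶ Cc) (s : A ⟶ X) (ht : S t) (hs : S s)
          (δ₁ δ₂ : T.E Z X),
        add (Quot.mk _ ⟨Z, X, t, s, ht, hs, δ₁⟩) (Quot.mk _ ⟨Z, X, t, s, ht, hs, δ₂⟩)
          = Quot.mk _ ⟨Z, X, t, s, ht, hs, δ₁ + δ₂⟩) ∧
      (∀ (Z X : D) (t : Z ⟶ Cc) (s : A ⟶ X) (ht : S t) (hs : S s) (δ : T.E Z X),
        neg (Quot.mk _ ⟨Z, X, t, s, ht, hs, δ⟩)
          = Quot.mk _ ⟨Z, X, t, s, ht, hs, -δ⟩) := by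
    classical
  have commT : ∀ T₁ T₂ : Triplet S T Cc A,
      Quot.mk (TripletRel S T Cc A) (addT T h23 T₁ T₂) =
      Quot.mk (TripletRel S T Cc A) (addT T h23 T₂ T₁) := by
    intro T₁ T₂
    obtain ⟨v₁, v₂, u₁, u₂, a, b, c, d, e, f, g, hh, hδ⟩ := addT_isCD T h23 T₁ T₂
    exact (addT_eq T h23 ⟨v₂, v₁, u₂, u₁, b, a, d, c, f, e, hh, g, by
      rw [hδ, add_comm]⟩).symm
  have wdl : ∀ T₁ T₁' T₂ : Triplet S T Cc A, TripletRel S T Cc A T₁ T₁' →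
      Quot.mk (TripletRel S T Cc A) (addT T h23 T₁ T₂) =
      Quot.mk (TripletRel S T Cc A) (addT T h23 T₁' T₂) := by
    intro T₁ T₁' T₂ hR
    obtain ⟨Zh, Xh, th, sh, uh₁, vh₁, uh₂, vh₂, hst, hss, hu1, hv1, hu2, hv2,
      e1, e2, e3, e4, key⟩ := hR
    obtain ⟨Z₀, w, vc, hw, hvc, hwt⟩ := oreRight S h23 th T₂.t hst T₂.ht
    obtain ⟨X₀, xx, uc, hxq, huc, hxs⟩ := oreLeft S h23 sh T₂.s hss T₂.hs
    have hP : IsCD T T₁ T₂ ⟨Z₀, X₀, w ≫ th, sh ≫ xx, h23.1 _ _ hw hst,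
        h23.1 _ _ hss hxq,
        T.pull (w ≫ vh₁) (T.push (uh₁ ≫ xx) T₁.δ) + T.pull vc (T.push uc T₂.δ)⟩ :=
      ⟨w ≫ vh₁, vc, uh₁ ≫ xx, uc, h23.1 _ _ hw hv1, hvc, h23.1 _ _ hu1 hxq, huc,
        by show w ≫ th = (w ≫ vh₁) ≫ T₁.t; rw [e3]; simp only [Category.assoc],
        hwt,
        by show sh ≫ xx = T₁.s ≫ uh₁ ≫ xx; rw [e1]; simp only [Category.assoc],
        hxs, rfl⟩
    have hP' : IsCD T T₁' T₂ ⟨Z₀, X₀, w ≫ th, sh ≫ xx, h23.1 _ _ hw hst,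
        h23.1 _ _ hss hxq,
        T.pull (w ≫ vh₁) (T.push (uh₁ ≫ xx) T₁.δ) + T.pull vc (T.push uc T₂.δ)⟩ :=
      ⟨w ≫ vh₂, vc, uh₂ ≫ xx, uc, h23.1 _ _ hw hv2, hvc, h23.1 _ _ hu2 hxq, huc,
        by show w ≫ th = (w ≫ vh₂) ≫ T₁'.t; rw [e4]; simp only [Category.assoc],
        hwt,
        by show sh ≫ xx = T₁'.s ≫ uh₂ ≫ xx; rw [e2]; simp only [Category.assoc],
        hxs, by
          show T.pull (w ≫ vh₁) (T.push (uh₁ ≫ xx) T₁.δ) +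
              T.pull vc (T.push uc T₂.δ) =
            T.pull (w ≫ vh₂) (T.push (uh₂ ≫ xx) T₁'.δ) +
              T.pull vc (T.push uc T₂.δ)
          rw [tsh T, key, ← tsh T]⟩
    exact (addT_eq T h23 hP).trans (addT_eq T h23 hP').symm
  have wdr : ∀ T₁ T₂ T₂' : Triplet S T Cc A, TripletRel S T Cc A T₂ T₂' →
      Quot.mk (TripletRel S T Cc A) (addT T h23 T₁ T₂) =
      Quot.mk (TripletRel S T Cc A) (addT T h23 T₁ T₂') :=
    fun T₁ T₂ T₂' h =>
      (commT T₁ T₂).trans ((wdl T₂ T₂' T₁ h).trans (commT T₂' T₁))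
  refine ⟨Quot.lift₂ (fun T₁ T₂ => Quot.mk (TripletRel S T Cc A) (addT T h23 T₁ T₂))
      (fun a b₁ b₂ h => wdr a b₁ b₂ h) (fun a₁ a₂ b h => wdl a₁ a₂ b h),
    Quot.mk _ ⟨Cc, A, 𝟙 Cc, 𝟙 A, S.id_mem Cc, S.id_mem A, 0⟩,
    Quot.lift (fun P => Quot.mk (TripletRel S T Cc A) (negT T P))
      (fun P P' h => Quot.sound (negT_rel T h)),
    ?_, ?_, ?_, ?_, rfl, ?_, ?_⟩
  · -- associativity
    intro x y z
    induction x using Quot.ind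
    induction y using Quot.ind
    induction z using Quot.ind
    rename_i T₁ T₂ T₃
    obtain ⟨v₁, v₂, u₁, u₂, hv₁, hv₂, hu₁, hu₂, ct₁, ct₂, cs₁, cs₂, hδ⟩ :=
      addT_isCD T h23 T₁ T₂
    obtain ⟨Z, w, v₃, hw, hv₃, hwt⟩ := oreRight S h23 (addT T h23 T₁ T₂).t T₃.t
      (addT T h23 T₁ T₂).ht T₃.ht
    obtain ⟨X, xx, u₃, hxq, hu₃, hxs⟩ := oreLeft S h23 (addT T h23 T₁ T₂).s T₃.s
      (addT T h23 T₁ T₂).hs T₃.hs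
    have htS : S (w ≫ (addT T h23 T₁ T₂).t) := h23.1 _ _ hw (addT T h23 T₁ T₂).ht
    have hsS : S ((addT T h23 T₁ T₂).s ≫ xx) := h23.1 _ _ (addT T h23 T₁ T₂).hs hxq
    set t0 : Z ⟶ Cc := w ≫ (addT T h23 T₁ T₂).t with ht0
    set s0 : A ⟶ X := (addT T h23 T₁ T₂).s ≫ xx with hs0
    set ρ₁ := T.pull (w ≫ v₁) (T.push (u₁ ≫ xx) T₁.δ) with hρ₁
    set ρ₂ := T.pull (w ≫ v₂) (T.push (u₂ ≫ xx) T₂.δ) with hρ₂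
    set ρ₃ := T.pull v₃ (T.push u₃ T₃.δ) with hρ₃
    have hCD_L : IsCD T (addT T h23 T₁ T₂) T₃
        ⟨Z, X, t0, s0, htS, hsS, (ρ₁ + ρ₂) + ρ₃⟩ :=
      ⟨w, v₃, xx, u₃, hw, hv₃, hxq, hu₃, rfl, hwt, rfl, hxs, by
        show (ρ₁ + ρ₂) + ρ₃ =
          T.pull w (T.push xx (addT T h23 T₁ T₂).δ) + T.pull v₃ (T.push u₃ T₃.δ)
        rw [hρ₁, hρ₂, hρ₃, hδ, T.push_add, T.pull_add, tsh T, tsh T]⟩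
    have hCD_23 : IsCD T T₂ T₃ ⟨Z, X, t0, s0, htS, hsS, ρ₂ + ρ₃⟩ :=
      ⟨w ≫ v₂, v₃, u₂ ≫ xx, u₃, h23.1 _ _ hw hv₂, hv₃, h23.1 _ _ hu₂ hxq, hu₃,
        by show w ≫ (addT T h23 T₁ T₂).t = (w ≫ v₂) ≫ T₂.t
           rw [ct₂]; simp only [Category.assoc],
        hwt,
        by show (addT T h23 T₁ T₂).s ≫ xx = T₂.s ≫ u₂ ≫ xx
           rw [cs₂]; simp only [Category.assoc],
        hxs, by
          show ρ₂ + ρ₃ = T.pull (w ≫ v₂) (T.push (u₂ ≫ xx) T₂.δ) +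
            T.pull v₃ (T.push u₃ T₃.δ)
          rw [hρ₂, hρ₃]⟩
    have hCD_R : IsCD T T₁ ⟨Z, X, t0, s0, htS, hsS, ρ₂ + ρ₃⟩
        ⟨Z, X, t0, s0, htS, hsS, ρ₁ + (ρ₂ + ρ₃)⟩ :=
      ⟨w ≫ v₁, 𝟙 Z, u₁ ≫ xx, 𝟙 X, h23.1 _ _ hw hv₁, S.id_mem Z,
        h23.1 _ _ hu₁ hxq, S.id_mem X,
        by show w ≫ (addT T h23 T₁ T₂).t = (w ≫ v₁) ≫ T₁.t
           rw [ct₁]; simp only [Category.assoc],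
        (Category.id_comp t0).symm,
        by show (addT T h23 T₁ T₂).s ≫ xx = T₁.s ≫ u₁ ≫ xx
           rw [cs₁]; simp only [Category.assoc],
        (Category.comp_id s0).symm,
        by show ρ₁ + (ρ₂ + ρ₃) = T.pull (w ≫ v₁) (T.push (u₁ ≫ xx) T₁.δ) +
             T.pull (𝟙 Z) (T.push (𝟙 X) (ρ₂ + ρ₃))
           rw [T.push_id, T.pull_id, hρ₁]⟩
    show Quot.mk (TripletRel S T Cc A) (addT T h23 (addT T h23 T₁ T₂) T₃) =
      Quot.mk (TripletRel S T Cc A) (addT T h23 T₁ (addT T h23 T₂ T₃))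
    calc Quot.mk (TripletRel S T Cc A) (addT T h23 (addT T h23 T₁ T₂) T₃)
        = Quot.mk (TripletRel S T Cc A)
            ⟨Z, X, t0, s0, htS, hsS, (ρ₁ + ρ₂) + ρ₃⟩ := addT_eq T h23 hCD_L
      _ = Quot.mk (TripletRel S T Cc A)
            ⟨Z, X, t0, s0, htS, hsS, ρ₁ + (ρ₂ + ρ₃)⟩ := by rw [add_assoc]
      _ = Quot.mk (TripletRel S T Cc A)
            (addT T h23 T₁ ⟨Z, X, t0, s0, htS, hsS, ρ₂ + ρ₃⟩) :=
          (addT_eq T h23 hCD_R).symm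
      _ = Quot.mk (TripletRel S T Cc A) (addT T h23 T₁ (addT T h23 T₂ T₃)) :=
          (wdr T₁ (addT T h23 T₂ T₃) ⟨Z, X, t0, s0, htS, hsS, ρ₂ + ρ₃⟩
            (isCD_rel T h23 (addT_isCD T h23 T₂ T₃) hCD_23)).symm
  · -- commutativity
    intro x y
    induction x using Quot.ind
    induction y using Quot.ind
    rename_i T₁ T₂
    exact commT T₁ T₂
  · -- zero is left identity
    intro x
    induction x using Quot.ind
    rename_i T₁
    exact addT_eq T h23 ⟨T₁.t, 𝟙 T₁.Z, T₁.s, 𝟙 T₁.X, T₁.ht, S.id_mem _,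
      T₁.hs, S.id_mem _, (Category.comp_id T₁.t).symm,
      (Category.id_comp T₁.t).symm, (Category.id_comp T₁.s).symm,
      (Category.comp_id T₁.s).symm, by
        show T₁.δ = T.pull T₁.t (T.push T₁.s (0 : T.E Cc A)) +
          T.pull (𝟙 T₁.Z) (T.push (𝟙 T₁.X) T₁.δ)
        rw [tpush_zero, tpull_zero, T.push_id, T.pull_id, zero_add]⟩
  · -- neg is left inverse
    intro x
    induction x using Quot.ind
    rename_i T₁
    have h1 : Quot.mk (TripletRel S T Cc A) (addT T h23 (negT T T₁) T₁) =
        Quot.mk (TripletRel S T Cc A)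
          ⟨T₁.Z, T₁.X, T₁.t, T₁.s, T₁.ht, T₁.hs, 0⟩ :=
      addT_eq T h23 ⟨𝟙 T₁.Z, 𝟙 T₁.Z, 𝟙 T₁.X, 𝟙 T₁.X, S.id_mem _, S.id_mem _,
        S.id_mem _, S.id_mem _, (Category.id_comp T₁.t).symm,
        (Category.id_comp T₁.t).symm, (Category.comp_id T₁.s).symm,
        (Category.comp_id T₁.s).symm, by
          show (0 : T.E T₁.Z T₁.X) =
            T.pull (𝟙 T₁.Z) (T.push (𝟙 T₁.X) (-T₁.δ)) +
            T.pull (𝟙 T₁.Z) (T.push (𝟙 T₁.X) T₁.δ)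
          rw [T.push_id, T.pull_id, T.push_id, T.pull_id, neg_add_cancel]⟩
    have h2 : Quot.mk (TripletRel S T Cc A)
        (⟨T₁.Z, T₁.X, T₁.t, T₁.s, T₁.ht, T₁.hs, 0⟩ : Triplet S T Cc A) =
        Quot.mk (TripletRel S T Cc A)
          ⟨Cc, A, 𝟙 Cc, 𝟙 A, S.id_mem Cc, S.id_mem A, 0⟩ :=
      Quot.sound ⟨T₁.Z, T₁.X, T₁.t, T₁.s, 𝟙 T₁.X, 𝟙 T₁.Z, T₁.s, T₁.t,
        T₁.ht, T₁.hs, S.id_mem _, S.id_mem _, T₁.hs, T₁.ht,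
        (Category.comp_id T₁.s).symm, (Category.id_comp T₁.s).symm,
        (Category.id_comp T₁.t).symm, (Category.comp_id T₁.t).symm, by
          show T.pull (𝟙 T₁.Z) (T.push (𝟙 T₁.X) (0 : T.E T₁.Z T₁.X)) =
            T.pull T₁.t (T.push T₁.s (0 : T.E Cc A))
          rw [tpush_zero, tpull_zero, tpush_zero, tpull_zero]⟩
    exact h1.trans h2
  · -- sum over a common denominator
    intro Z X t s ht hs δ₁ δ₂
    exact addT_eq T h23 ⟨𝟙 Z, 𝟙 Z, 𝟙 X, 𝟙 X, S.id_mem Z, S.id_mem Z,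
      S.id_mem X, S.id_mem X, (Category.id_comp t).symm,
      (Category.id_comp t).symm, (Category.comp_id s).symm,
      (Category.comp_id s).symm, by
        show δ₁ + δ₂ = T.pull (𝟙 Z) (T.push (𝟙 X) δ₁) +
          T.pull (𝟙 Z) (T.push (𝟙 X) δ₂)
        rw [T.push_id, T.pull_id, T.push_id, T.pull_id]⟩
  · -- negation
    intro Z X t s ht hs δ
    rfl
end

section
/- With D, S, E as above, the assignment δ ↦ [id \ δ / id] defines an injective group homomorphism μ_{C,A} : E(C, A) → Ẽ(C, A) for each pair of objects, and these maps are natural in C and A, giving a natural transformation μ : E ⇒ Ẽ ∘ (Qᵒᵖ × Q) where Q : D → D[S⁻¹] is the localization functor. -/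
open CategoryTheory

universe v u

variable {D : Type u} [Category.{v} D] [Preadditive D]

/-- The canonical map `μ_{C,A} : E(C, A) → Ẽ(C, A)`, `δ ↦ [id \ δ / id]`. -/
def muMap (S : MorphismProperty D) [S.HasLeftCalculusOfFractions]
    (T : AddBifunctor D) (Cc A : D) (δ : T.E Cc A) : Quot (TripletRel S T Cc A) :=
  Quot.mk _ ⟨Cc, A, 𝟙 Cc, 𝟙 A, S.id_mem Cc, S.id_mem A, δ⟩

namespace MuProof

set_option linter.unusedSectionVars false

open CategoryTheory

variable {D : Type u} [Category.{v} D] [Preadditive D]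
variable {S : MorphismProperty D} {T : AddBifunctor D}

/- ### Additivity helpers -/

lemma push_sub {Z X X' : D} (a : X ⟶ X') (δ δ' : T.E Z X) :
    T.push a (δ - δ') = T.push a δ - T.push a δ' :=
  (AddMonoidHom.mk' (T.push a) (T.push_add a)).map_sub δ δ'

lemma pull_sub {Z' Z X : D} (c : Z' ⟶ Z) (δ δ' : T.E Z X) :
    T.pull c (δ - δ') = T.pull c δ - T.pull c δ' :=
  (AddMonoidHom.mk' (T.pull c) (T.pull_add c)).map_sub δ δ'

/- ### Ore conditions -/

lemma ore_left [S.HasLeftCalculusOfFractions] {A X Y : D} {s : A ⟶ X} (hs : S s)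
    (f : A ⟶ Y) : ∃ (X' : D) (f' : X ⟶ X') (s' : Y ⟶ X'), S s' ∧ f ≫ s' = s ≫ f' := by
  obtain ⟨ψ, hψ⟩ := (MorphismProperty.RightFraction.mk s hs f).exists_leftFraction
  exact ⟨ψ.Y', ψ.f, ψ.s, ψ.hs, hψ⟩

lemma ore_right [S.HasRightCalculusOfFractions] {Z Cc Y : D} {t : Z ⟶ Cc} (ht : S t)
    (g : Y ⟶ Cc) : ∃ (W : D) (g' : W ⟶ Z) (t' : W ⟶ Y), S t' ∧ t' ≫ g = g' ≫ t := by
  obtain ⟨ψ, hψ⟩ := (MorphismProperty.LeftFraction.mk g t ht).exists_rightFraction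
  exact ⟨ψ.X', ψ.f, ψ.s, ψ.hs, hψ⟩

lemma ext_left [S.HasLeftCalculusOfFractions] {A X Y : D} {s : A ⟶ X} (hs : S s)
    {f g : X ⟶ Y} (h : s ≫ f = s ≫ g) :
    ∃ (Y' : D) (r : Y ⟶ Y'), S r ∧ f ≫ r = g ≫ r := by
  obtain ⟨Y', r, hr, h'⟩ :=
    MorphismProperty.HasLeftCalculusOfFractions.ext f g s hs h
  exact ⟨Y', r, hr, h'⟩

lemma ext_right [S.HasRightCalculusOfFractions] {X Y Y' : D} {s : Y ⟶ Y'} (hs : S s)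
    {f g : X ⟶ Y} (h : f ≫ s = g ≫ s) :
    ∃ (X' : D) (r : X' ⟶ X), S r ∧ r ≫ f = r ≫ g := by
  obtain ⟨X', r, hr, h'⟩ :=
    MorphismProperty.HasRightCalculusOfFractions.ext f g s hs h
  exact ⟨X', r, hr, h'⟩

lemma pp_pp (T : AddBifunctor D) {Z'' Z' Z X X' X'' : D} (v : Z' ⟶ Z) (v' : Z'' ⟶ Z')
    (u : X ⟶ X') (u' : X' ⟶ X'') (δ : T.E Z X) :
    T.pull (v' ≫ v) (T.push (u ≫ u') δ)
      = T.pull v' (T.push u' (T.pull v (T.push u δ))) := by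
  rw [T.pull_comp, T.push_comp, T.pull_push v u']


lemma rel_refl [S.HasLeftCalculusOfFractions] {Cc A : D} (Tr : Triplet S T Cc A) : TripletRel S T Cc A Tr Tr :=
  ⟨Tr.Z, Tr.X, Tr.t, Tr.s, 𝟙 _, 𝟙 _, 𝟙 _, 𝟙 _, Tr.ht, Tr.hs,
    S.id_mem _, S.id_mem _, S.id_mem _, S.id_mem _,
    (Category.comp_id _).symm, (Category.comp_id _).symm,
    (Category.id_comp _).symm, (Category.id_comp _).symm, rfl⟩

lemma rel_symm {Cc A : D} {T₁ T₂ : Triplet S T Cc A}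
    (h : TripletRel S T Cc A T₁ T₂) : TripletRel S T Cc A T₂ T₁ := by
  obtain ⟨Z, X, t, s, u₁, v₁, u₂, v₂, hT, hS, hu₁, hv₁, hu₂, hv₂, e₁, e₂, e₃, e₄, key⟩ := h
  exact ⟨Z, X, t, s, u₂, v₂, u₁, v₁, hT, hS, hu₂, hv₂, hu₁, hv₁, e₂, e₁, e₄, e₃, key.symm⟩

lemma rel_trans [S.HasLeftCalculusOfFractions] [S.HasRightCalculusOfFractions]
    (h23 : TwoOutOfThree S) {Cc A : D} {T₁ T₂ T₃ : Triplet S T Cc A}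
    (h₁ : TripletRel S T Cc A T₁ T₂) (h₂ : TripletRel S T Cc A T₂ T₃) :
    TripletRel S T Cc A T₁ T₃ := by
  obtain ⟨Z, X, t, s, u₁, v₁, u₂, v₂, hT, hS, hu₁, hv₁, hu₂, hv₂, e₁, e₂, e₃, e₄, key₁⟩ := h₁
  obtain ⟨Z', X', t', s', w₂, x₂, w₃, x₃, hT', hS', hw₂, hx₂, hw₃, hx₃, f₁, f₂, f₃, f₄, key₂⟩ := h₂
  obtain ⟨X₀, p, p', hp', hpp⟩ := ore_left hu₂ w₂   -- w₂ ≫ p' = u₂ ≫ p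
  have hp : S p := h23.2.1 u₂ p hu₂ (by rw [← hpp]; exact S.comp_mem _ _ hw₂ hp')
  obtain ⟨Z₀, q, q', hq', hqq⟩ := ore_right hv₂ x₂   -- q' ≫ x₂ = q ≫ v₂
  have hq : S q := h23.2.2 q v₂ hv₂ (by rw [← hqq]; exact S.comp_mem _ _ hq' hx₂)
  have hsp : s ≫ p = s' ≫ p' := by
    rw [e₂, f₁, Category.assoc, Category.assoc, hpp]
  have hqt : q ≫ t = q' ≫ t' := by
    rw [e₄, f₃, ← Category.assoc, ← Category.assoc, hqq]
  refine ⟨Z₀, X₀, q ≫ t, s ≫ p, u₁ ≫ p, q ≫ v₁, w₃ ≫ p', q' ≫ x₃,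
    S.comp_mem _ _ hq hT, S.comp_mem _ _ hS hp,
    S.comp_mem _ _ hu₁ hp, S.comp_mem _ _ hq hv₁,
    S.comp_mem _ _ hw₃ hp', S.comp_mem _ _ hq' hx₃, ?_, ?_, ?_, ?_, ?_⟩
  · rw [e₁, Category.assoc]
  · rw [hsp, f₂, Category.assoc]
  · rw [e₃, Category.assoc]
  · rw [hqt, f₄, Category.assoc]
  · rw [pp_pp, pp_pp, key₁, ← key₂, ← pp_pp, ← pp_pp, hpp, hqq]

lemma rel_equiv [S.HasLeftCalculusOfFractions] [S.HasRightCalculusOfFractions]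
    (h23 : TwoOutOfThree S) (Cc A : D) : Equivalence (TripletRel S T Cc A) :=
  ⟨rel_refl, rel_symm, rel_trans h23⟩

lemma mk_eq_iff [S.HasLeftCalculusOfFractions] [S.HasRightCalculusOfFractions]
    (h23 : TwoOutOfThree S) {Cc A : D} {T₁ T₂ : Triplet S T Cc A} :
    (Quot.mk (TripletRel S T Cc A) T₁ = Quot.mk (TripletRel S T Cc A) T₂)
      ↔ TripletRel S T Cc A T₁ T₂ :=
  Quot.eq.trans (rel_equiv h23 Cc A).eqvGen_iff


/- ### Addition is well defined on common denominators -/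

lemma rel_add [S.HasLeftCalculusOfFractions] [S.HasRightCalculusOfFractions]
    (h23 : TwoOutOfThree S) {Cc A : D} {Z X Z' X' : D} {t : Z ⟶ Cc} {s : A ⟶ X}
    {t' : Z' ⟶ Cc} {s' : A ⟶ X'} {ht : S t} {hs : S s} {ht' : S t'} {hs' : S s'}
    {ρ₁ ρ₂ : T.E Z X} {ρ₁' ρ₂' : T.E Z' X'}
    (h₁ : TripletRel S T Cc A ⟨Z, X, t, s, ht, hs, ρ₁⟩ ⟨Z', X', t', s', ht', hs', ρ₁'⟩)
    (h₂ : TripletRel S T Cc A ⟨Z, X, t, s, ht, hs, ρ₂⟩ ⟨Z', X', t', s', ht', hs', ρ₂'⟩) :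
    TripletRel S T Cc A ⟨Z, X, t, s, ht, hs, ρ₁ + ρ₂⟩
      ⟨Z', X', t', s', ht', hs', ρ₁' + ρ₂'⟩ := by
  obtain ⟨Z₁, X₁, t₁, s₁, u₁, v₁, u₁', v₁', ht₁, hs₁, hu₁, hv₁, hu₁', hv₁', a₁, a₂, a₃, a₄, k₁⟩ := h₁
  obtain ⟨Z₂, X₂, t₂, s₂, u₂, v₂, u₂', v₂', ht₂, hs₂, hu₂, hv₂, hu₂', hv₂', b₁, b₂, b₃, b₄, k₂⟩ := h₂
  dsimp only at a₁ a₂ a₃ a₄ b₁ b₂ b₃ b₄ k₁ k₂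
  obtain ⟨X₃, p, q, hq, h₃⟩ := ore_left hu₁ u₂    -- u₂ ≫ q = u₁ ≫ p
  have hp : S p := h23.2.1 u₁ p hu₁ (by rw [← h₃]; exact S.comp_mem _ _ hu₂ hq)
  have hx : s' ≫ (u₁' ≫ p) = s' ≫ (u₂' ≫ q) := by
    simp only [← Category.assoc]
    rw [← a₂, ← b₂, a₁, b₁]
    simp only [Category.assoc]
    rw [h₃]
  obtain ⟨X₄, r, hr, h₄⟩ := ext_left hs' hx    -- (u₁'≫p)≫r = (u₂'≫q)≫r
  obtain ⟨Z₃, a, b, hb, h₅⟩ := ore_right hv₁ v₂   -- b ≫ v₂ = a ≫ v₁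
  have ha : S a := h23.2.2 a v₁ hv₁ (by rw [← h₅]; exact S.comp_mem _ _ hb hv₂)
  have hz : (a ≫ v₁') ≫ t' = (b ≫ v₂') ≫ t' := by
    simp only [Category.assoc]
    rw [← a₄, ← b₄, a₃, b₃]
    simp only [← Category.assoc]
    rw [h₅]
  obtain ⟨Z₄, c, hc, h₆⟩ := ext_right ht' hz    -- c≫(a≫v₁') = c≫(b≫v₂')
  have eV : (c ≫ a) ≫ v₁ = (c ≫ b) ≫ v₂ := by
    simp only [Category.assoc]; rw [h₅]
  have eV' : (c ≫ a) ≫ v₁' = (c ≫ b) ≫ v₂' := by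
    simp only [Category.assoc]; exact h₆
  have eU : u₁ ≫ (p ≫ r) = u₂ ≫ (q ≫ r) := by
    simp only [← Category.assoc]; rw [h₃]
  have eU' : u₁' ≫ (p ≫ r) = u₂' ≫ (q ≫ r) := by
    simp only [← Category.assoc]; exact h₄
  have K₁ : T.pull ((c ≫ a) ≫ v₁) (T.push (u₁ ≫ (p ≫ r)) ρ₁)
      = T.pull ((c ≫ a) ≫ v₁') (T.push (u₁' ≫ (p ≫ r)) ρ₁') := by
    rw [pp_pp T v₁ (c ≫ a) u₁ (p ≫ r) ρ₁, pp_pp T v₁' (c ≫ a) u₁' (p ≫ r) ρ₁', k₁]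
  have K₂ : T.pull ((c ≫ a) ≫ v₁) (T.push (u₁ ≫ (p ≫ r)) ρ₂)
      = T.pull ((c ≫ a) ≫ v₁') (T.push (u₁' ≫ (p ≫ r)) ρ₂') := by
    rw [eV, eV', eU, eU', pp_pp T v₂ (c ≫ b) u₂ (q ≫ r) ρ₂,
      pp_pp T v₂' (c ≫ b) u₂' (q ≫ r) ρ₂', k₂]
  refine ⟨Z₄, X₄, ((c ≫ a) ≫ v₁) ≫ t, s ≫ (u₁ ≫ (p ≫ r)),
    u₁ ≫ (p ≫ r), (c ≫ a) ≫ v₁, u₁' ≫ (p ≫ r), (c ≫ a) ≫ v₁',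
    S.comp_mem _ _ (S.comp_mem _ _ (S.comp_mem _ _ hc ha) hv₁) ht,
    S.comp_mem _ _ hs (S.comp_mem _ _ hu₁ (S.comp_mem _ _ hp hr)),
    S.comp_mem _ _ hu₁ (S.comp_mem _ _ hp hr),
    S.comp_mem _ _ (S.comp_mem _ _ hc ha) hv₁,
    S.comp_mem _ _ hu₁' (S.comp_mem _ _ hp hr),
    S.comp_mem _ _ (S.comp_mem _ _ hc ha) hv₁',
    rfl, ?_, rfl, ?_, ?_⟩
  · show s ≫ (u₁ ≫ (p ≫ r)) = s' ≫ (u₁' ≫ (p ≫ r))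
    simp only [← Category.assoc]
    rw [← a₁, ← a₂]
  · show ((c ≫ a) ≫ v₁) ≫ t = ((c ≫ a) ≫ v₁') ≫ t'
    simp only [Category.assoc]
    rw [← a₃, ← a₄]
  · show T.pull ((c ≫ a) ≫ v₁) (T.push (u₁ ≫ (p ≫ r)) (ρ₁ + ρ₂))
      = T.pull ((c ≫ a) ≫ v₁') (T.push (u₁' ≫ (p ≫ r)) (ρ₁' + ρ₂'))
    rw [T.push_add, T.pull_add, T.push_add, T.pull_add, K₁, K₂]

/- ### Fillers from the Ore conditions -/

structure LFill (S : MorphismProperty D) {A X A' : D} (s : A ⟶ X) (a : A ⟶ A') where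
  X' : D
  f : X ⟶ X'
  s' : A' ⟶ X'
  hs' : S s'
  w : a ≫ s' = s ≫ f

noncomputable def lfill [S.HasLeftCalculusOfFractions] {A X A' : D} {s : A ⟶ X}
    (hs : S s) (a : A ⟶ A') : LFill S s a :=
  let h := (MorphismProperty.RightFraction.mk s hs a).exists_leftFraction
  ⟨h.choose.Y', h.choose.f, h.choose.s, h.choose.hs, h.choose_spec⟩

structure RFill (S : MorphismProperty D) {Z Cc Cc' : D} (t : Z ⟶ Cc) (c : Cc' ⟶ Cc) where
  Z' : D
  g : Z' ⟶ Z
  t' : Z' ⟶ Cc'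
  ht' : S t'
  w : t' ≫ c = g ≫ t

noncomputable def rfill [S.HasRightCalculusOfFractions] {Z Cc Cc' : D} {t : Z ⟶ Cc}
    (ht : S t) (c : Cc' ⟶ Cc) : RFill S t c :=
  let h := (MorphismProperty.LeftFraction.mk c t ht).exists_rightFraction
  ⟨h.choose.X', h.choose.f, h.choose.s, h.choose.hs, h.choose_spec⟩

/- ### Pushforward on triplets, independence of the filler -/

lemma rel_push_indep [S.HasLeftCalculusOfFractions] [S.HasRightCalculusOfFractions]
    (h23 : TwoOutOfThree S) {Cc A A' : D} (a : A ⟶ A') (Tr : Triplet S T Cc A)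
    {X₁ X₂ : D} (f₁ : Tr.X ⟶ X₁) (s₁ : A' ⟶ X₁) (hs₁ : S s₁) (w₁ : a ≫ s₁ = Tr.s ≫ f₁)
    (f₂ : Tr.X ⟶ X₂) (s₂ : A' ⟶ X₂) (hs₂ : S s₂) (w₂ : a ≫ s₂ = Tr.s ≫ f₂) :
    TripletRel S T Cc A' ⟨Tr.Z, X₁, Tr.t, s₁, Tr.ht, hs₁, T.push f₁ Tr.δ⟩
      ⟨Tr.Z, X₂, Tr.t, s₂, Tr.ht, hs₂, T.push f₂ Tr.δ⟩ := by
  obtain ⟨X₀, f₀, s₀, hs₀, h₀⟩ := ore_left hs₁ s₂    -- s₂ ≫ s₀ = s₁ ≫ f₀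
  have hf₀ : S f₀ := h23.2.1 s₁ f₀ hs₁ (by rw [← h₀]; exact S.comp_mem _ _ hs₂ hs₀)
  have hx : Tr.s ≫ (f₁ ≫ f₀) = Tr.s ≫ (f₂ ≫ s₀) := by
    simp only [← Category.assoc]
    rw [← w₁, ← w₂]
    simp only [Category.assoc]
    rw [h₀]
  obtain ⟨X₅, r, hr, h₅⟩ := ext_left Tr.hs hx    -- (f₁≫f₀)≫r = (f₂≫s₀)≫r
  have hmor : f₁ ≫ (f₀ ≫ r) = f₂ ≫ (s₀ ≫ r) := by
    simp only [← Category.assoc]; exact h₅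
  refine ⟨Tr.Z, X₅, Tr.t, s₁ ≫ (f₀ ≫ r), f₀ ≫ r, 𝟙 Tr.Z, s₀ ≫ r, 𝟙 Tr.Z,
    Tr.ht, S.comp_mem _ _ hs₁ (S.comp_mem _ _ hf₀ hr),
    S.comp_mem _ _ hf₀ hr, S.id_mem _, S.comp_mem _ _ hs₀ hr, S.id_mem _,
    rfl, ?_, (Category.id_comp _).symm, (Category.id_comp _).symm, ?_⟩
  · show s₁ ≫ (f₀ ≫ r) = s₂ ≫ (s₀ ≫ r)
    simp only [← Category.assoc]
    rw [h₀]
  · show T.pull (𝟙 Tr.Z) (T.push (f₀ ≫ r) (T.push f₁ Tr.δ))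
      = T.pull (𝟙 Tr.Z) (T.push (s₀ ≫ r) (T.push f₂ Tr.δ))
    rw [T.pull_id, T.pull_id, ← T.push_comp, ← T.push_comp, hmor]

/-- Pushforward of a triplet along `a : A ⟶ A'`, via a chosen filler. -/
noncomputable def pushT [S.HasLeftCalculusOfFractions] {Cc A A' : D} (a : A ⟶ A')
    (Tr : Triplet S T Cc A) : Triplet S T Cc A' :=
  let L := lfill Tr.hs a
  ⟨Tr.Z, L.X', Tr.t, L.s', Tr.ht, L.hs', T.push L.f Tr.δ⟩

lemma pushT_eq [S.HasLeftCalculusOfFractions] [S.HasRightCalculusOfFractions]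
    (h23 : TwoOutOfThree S) {Cc A A' : D} (a : A ⟶ A') (Tr : Triplet S T Cc A)
    {X' : D} (f : Tr.X ⟶ X') (s' : A' ⟶ X') (hs' : S s') (w : a ≫ s' = Tr.s ≫ f) :
    (Quot.mk (TripletRel S T Cc A') (pushT a Tr))
      = Quot.mk (TripletRel S T Cc A') ⟨Tr.Z, X', Tr.t, s', Tr.ht, hs', T.push f Tr.δ⟩ :=
  Quot.sound (rel_push_indep h23 a Tr (lfill Tr.hs a).f (lfill Tr.hs a).s'
    (lfill Tr.hs a).hs' (lfill Tr.hs a).w f s' hs' w)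

/- ### Pullback on triplets, independence of the filler -/

lemma rel_pull_indep [S.HasLeftCalculusOfFractions] [S.HasRightCalculusOfFractions]
    (h23 : TwoOutOfThree S) {Cc Cc' A : D} (c : Cc' ⟶ Cc) (Tr : Triplet S T Cc A)
    {Z₁ Z₂ : D} (g₁ : Z₁ ⟶ Tr.Z) (t₁ : Z₁ ⟶ Cc') (ht₁ : S t₁) (w₁ : t₁ ≫ c = g₁ ≫ Tr.t)
    (g₂ : Z₂ ⟶ Tr.Z) (t₂ : Z₂ ⟶ Cc') (ht₂ : S t₂) (w₂ : t₂ ≫ c = g₂ ≫ Tr.t) :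
    TripletRel S T Cc' A ⟨Z₁, Tr.X, t₁, Tr.s, ht₁, Tr.hs, T.pull g₁ Tr.δ⟩
      ⟨Z₂, Tr.X, t₂, Tr.s, ht₂, Tr.hs, T.pull g₂ Tr.δ⟩ := by
  obtain ⟨Z₀, g₀, d, hd, h₀⟩ := ore_right ht₁ t₂    -- d ≫ t₂ = g₀ ≫ t₁
  have hg₀ : S g₀ := h23.2.2 g₀ t₁ ht₁ (by rw [← h₀]; exact S.comp_mem _ _ hd ht₂)
  have hx : (g₀ ≫ g₁) ≫ Tr.t = (d ≫ g₂) ≫ Tr.t := by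
    simp only [Category.assoc]
    rw [← w₁, ← w₂]
    simp only [← Category.assoc]
    rw [h₀]
  obtain ⟨Z₅, r, hr, h₅⟩ := ext_right Tr.ht hx    -- r≫(g₀≫g₁) = r≫(d≫g₂)
  have hmor : (r ≫ g₀) ≫ g₁ = (r ≫ d) ≫ g₂ := by
    simp only [Category.assoc]; exact h₅
  refine ⟨Z₅, Tr.X, (r ≫ g₀) ≫ t₁, Tr.s, 𝟙 Tr.X, r ≫ g₀, 𝟙 Tr.X, r ≫ d,
    S.comp_mem _ _ (S.comp_mem _ _ hr hg₀) ht₁, Tr.hs,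
    S.id_mem _, S.comp_mem _ _ hr hg₀, S.id_mem _, S.comp_mem _ _ hr hd,
    (Category.comp_id _).symm, (Category.comp_id _).symm, rfl, ?_, ?_⟩
  · show (r ≫ g₀) ≫ t₁ = (r ≫ d) ≫ t₂
    simp only [Category.assoc]
    rw [h₀]
  · show T.pull (r ≫ g₀) (T.push (𝟙 Tr.X) (T.pull g₁ Tr.δ))
      = T.pull (r ≫ d) (T.push (𝟙 Tr.X) (T.pull g₂ Tr.δ))
    rw [T.push_id, T.push_id, ← T.pull_comp, ← T.pull_comp, hmor]

/-- Pullback of a triplet along `c : Cc' ⟶ Cc`, via a chosen filler. -/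
noncomputable def pullT [S.HasRightCalculusOfFractions] {Cc Cc' A : D} (c : Cc' ⟶ Cc)
    (Tr : Triplet S T Cc A) : Triplet S T Cc' A :=
  let R := rfill Tr.ht c
  ⟨R.Z', Tr.X, R.t', Tr.s, R.ht', Tr.hs, T.pull R.g Tr.δ⟩

lemma pullT_eq [S.HasLeftCalculusOfFractions] [S.HasRightCalculusOfFractions]
    (h23 : TwoOutOfThree S) {Cc Cc' A : D} (c : Cc' ⟶ Cc) (Tr : Triplet S T Cc A)
    {Z' : D} (g : Z' ⟶ Tr.Z) (t' : Z' ⟶ Cc') (ht' : S t') (w : t' ≫ c = g ≫ Tr.t) :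
    (Quot.mk (TripletRel S T Cc' A) (pullT c Tr))
      = Quot.mk (TripletRel S T Cc' A) ⟨Z', Tr.X, t', Tr.s, ht', Tr.hs, T.pull g Tr.δ⟩ :=
  Quot.sound (rel_pull_indep h23 c Tr (rfill Tr.ht c).g (rfill Tr.ht c).t'
    (rfill Tr.ht c).ht' (rfill Tr.ht c).w g t' ht' w)

/- ### Push and pull on the localized groups -/

noncomputable def tpush [S.HasLeftCalculusOfFractions] [S.HasRightCalculusOfFractions]
    (h23 : TwoOutOfThree S) (Cc : D) {A A' : D} (a : A ⟶ A') :
    Quot (TripletRel S T Cc A) → Quot (TripletRel S T Cc A') :=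
  Quot.lift (fun Tr => Quot.mk _ (pushT a Tr)) (by
    intro T₁ T₂ h
    obtain ⟨Z, X, t, s, u₁, v₁, u₂, v₂, hT, hS, hu₁, hv₁, hu₂, hv₂, e₁, e₂, e₃, e₄, key⟩ := h
    obtain ⟨X', lf, ls, hls, lw⟩ := lfill hS a
    show Quot.mk (TripletRel S T Cc A') (pushT a T₁) = Quot.mk (TripletRel S T Cc A') (pushT a T₂)
    refine ((pushT_eq h23 a T₁ (u₁ ≫ lf) ls hls
        (by rw [lw, e₁, Category.assoc])).trans ?_).trans
      (pushT_eq h23 a T₂ (u₂ ≫ lf) ls hls (by rw [lw, e₂, Category.assoc])).symm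
    apply Quot.sound
    refine ⟨Z, X', t, ls, 𝟙 _, v₁, 𝟙 _, v₂, hT, hls,
      S.id_mem _, hv₁, S.id_mem _, hv₂,
      (Category.comp_id _).symm, (Category.comp_id _).symm, e₃, e₄, ?_⟩
    show T.pull v₁ (T.push (𝟙 X') (T.push (u₁ ≫ lf) T₁.δ))
        = T.pull v₂ (T.push (𝟙 X') (T.push (u₂ ≫ lf) T₂.δ))
    rw [T.push_id, T.push_id, T.push_comp, T.push_comp,
      T.pull_push v₁ lf, T.pull_push v₂ lf, key])

noncomputable def tpull [S.HasLeftCalculusOfFractions] [S.HasRightCalculusOfFractions]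
    (h23 : TwoOutOfThree S) {Cc' Cc : D} (c : Cc' ⟶ Cc) (A : D) :
    Quot (TripletRel S T Cc A) → Quot (TripletRel S T Cc' A) :=
  Quot.lift (fun Tr => Quot.mk _ (pullT c Tr)) (by
    intro T₁ T₂ h
    obtain ⟨Z, X, t, s, u₁, v₁, u₂, v₂, hT, hS, hu₁, hv₁, hu₂, hv₂, e₁, e₂, e₃, e₄, key⟩ := h
    obtain ⟨Z', rg, rt, hrt, rw'⟩ := rfill hT c
    show Quot.mk (TripletRel S T Cc' A) (pullT c T₁) = Quot.mk (TripletRel S T Cc' A) (pullT c T₂)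
    refine ((pullT_eq h23 c T₁ (rg ≫ v₁) rt hrt
        (by rw [rw', e₃, Category.assoc])).trans ?_).trans
      (pullT_eq h23 c T₂ (rg ≫ v₂) rt hrt (by rw [rw', e₄, Category.assoc])).symm
    apply Quot.sound
    refine ⟨Z', X, rt, s, u₁, 𝟙 _, u₂, 𝟙 _, hrt, hS,
      hu₁, S.id_mem _, hu₂, S.id_mem _, e₁, e₂,
      (Category.id_comp _).symm, (Category.id_comp _).symm, ?_⟩
    show T.pull (𝟙 Z') (T.push u₁ (T.pull (rg ≫ v₁) T₁.δ))
        = T.pull (𝟙 Z') (T.push u₂ (T.pull (rg ≫ v₂) T₂.δ))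
    rw [T.pull_id, T.pull_id, ← T.pull_push (rg ≫ v₁) u₁, ← T.pull_push (rg ≫ v₂) u₂,
      T.pull_comp, T.pull_comp, key])

lemma tpush_mk [S.HasLeftCalculusOfFractions] [S.HasRightCalculusOfFractions]
    (h23 : TwoOutOfThree S) {Cc A A' : D} (a : A ⟶ A') (Tr : Triplet S T Cc A)
    {X' : D} (f : Tr.X ⟶ X') (s' : A' ⟶ X') (hs' : S s') (w : a ≫ s' = Tr.s ≫ f) :
    tpush h23 Cc a (Quot.mk _ Tr)
      = Quot.mk _ ⟨Tr.Z, X', Tr.t, s', Tr.ht, hs', T.push f Tr.δ⟩ :=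
  pushT_eq h23 a Tr f s' hs' w

lemma tpull_mk [S.HasLeftCalculusOfFractions] [S.HasRightCalculusOfFractions]
    (h23 : TwoOutOfThree S) {Cc Cc' A : D} (c : Cc' ⟶ Cc) (Tr : Triplet S T Cc A)
    {Z' : D} (g : Z' ⟶ Tr.Z) (t' : Z' ⟶ Cc') (ht' : S t') (w : t' ≫ c = g ≫ Tr.t) :
    tpull h23 c A (Quot.mk _ Tr)
      = Quot.mk _ ⟨Z', Tr.X, t', Tr.s, ht', Tr.hs, T.pull g Tr.δ⟩ :=
  pullT_eq h23 c Tr g t' ht' w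

/- ### Functoriality of push and pull -/

variable [S.HasLeftCalculusOfFractions] [S.HasRightCalculusOfFractions]

lemma tpush_id (h23 : TwoOutOfThree S) (Cc A : D) (x : Quot (TripletRel S T Cc A)) :
    tpush h23 Cc (𝟙 A) x = x := by
  induction x using Quot.ind with
  | _ Tr =>
    rw [tpush_mk h23 (𝟙 A) Tr (𝟙 Tr.X) Tr.s Tr.hs (by simp), T.push_id]

lemma tpush_comp (h23 : TwoOutOfThree S) (Cc : D) {A A' A'' : D} (a : A ⟶ A')
    (b : A' ⟶ A'') (x : Quot (TripletRel S T Cc A)) :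
    tpush h23 Cc (a ≫ b) x = tpush h23 Cc b (tpush h23 Cc a x) := by
  induction x using Quot.ind with
  | _ Tr =>
    obtain ⟨X₁, f₁, s₁, hs₁, w₁⟩ := lfill Tr.hs a
    obtain ⟨X₂, f₂, s₂, hs₂, w₂⟩ := lfill hs₁ b
    calc tpush h23 Cc (a ≫ b) (Quot.mk _ Tr)
        = Quot.mk _ ⟨Tr.Z, X₂, Tr.t, s₂, Tr.ht, hs₂, T.push (f₁ ≫ f₂) Tr.δ⟩ :=
          tpush_mk h23 (a ≫ b) Tr (f₁ ≫ f₂) s₂ hs₂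
            (by rw [Category.assoc, w₂, ← Category.assoc, w₁, Category.assoc])
      _ = Quot.mk _ ⟨Tr.Z, X₂, Tr.t, s₂, Tr.ht, hs₂, T.push f₂ (T.push f₁ Tr.δ)⟩ := by
          rw [T.push_comp]
      _ = tpush h23 Cc b (Quot.mk _ ⟨Tr.Z, X₁, Tr.t, s₁, Tr.ht, hs₁, T.push f₁ Tr.δ⟩) :=
          (tpush_mk h23 b ⟨Tr.Z, X₁, Tr.t, s₁, Tr.ht, hs₁, T.push f₁ Tr.δ⟩ f₂ s₂ hs₂ w₂).symm
      _ = tpush h23 Cc b (tpush h23 Cc a (Quot.mk _ Tr)) := by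
          rw [tpush_mk h23 a Tr f₁ s₁ hs₁ w₁]

lemma tpull_id (h23 : TwoOutOfThree S) (Cc A : D) (x : Quot (TripletRel S T Cc A)) :
    tpull h23 (𝟙 Cc) A x = x := by
  induction x using Quot.ind with
  | _ Tr =>
    rw [tpull_mk h23 (𝟙 Cc) Tr (𝟙 Tr.Z) Tr.t Tr.ht (by simp), T.pull_id]

lemma tpull_comp (h23 : TwoOutOfThree S) {Cc'' Cc' Cc : D} (d : Cc'' ⟶ Cc')
    (c : Cc' ⟶ Cc) (A : D) (x : Quot (TripletRel S T Cc A)) :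
    tpull h23 (d ≫ c) A x = tpull h23 d A (tpull h23 c A x) := by
  induction x using Quot.ind with
  | _ Tr =>
    obtain ⟨Z₁, g₁, t₁, ht₁, w₁⟩ := rfill Tr.ht c
    obtain ⟨Z₂, g₂, t₂, ht₂, w₂⟩ := rfill ht₁ d
    calc tpull h23 (d ≫ c) A (Quot.mk _ Tr)
        = Quot.mk _ ⟨Z₂, Tr.X, t₂, Tr.s, ht₂, Tr.hs, T.pull (g₂ ≫ g₁) Tr.δ⟩ :=
          tpull_mk h23 (d ≫ c) Tr (g₂ ≫ g₁) t₂ ht₂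
            (by rw [← Category.assoc, w₂, Category.assoc, w₁, ← Category.assoc])
      _ = Quot.mk _ ⟨Z₂, Tr.X, t₂, Tr.s, ht₂, Tr.hs, T.pull g₂ (T.pull g₁ Tr.δ)⟩ := by
          rw [T.pull_comp]
      _ = tpull h23 d A (Quot.mk _ ⟨Z₁, Tr.X, t₁, Tr.s, ht₁, Tr.hs, T.pull g₁ Tr.δ⟩) :=
          (tpull_mk h23 d ⟨Z₁, Tr.X, t₁, Tr.s, ht₁, Tr.hs, T.pull g₁ Tr.δ⟩ g₂ t₂ ht₂ w₂).symm
      _ = tpull h23 d A (tpull h23 c A (Quot.mk _ Tr)) := by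
          rw [tpull_mk h23 c Tr g₁ t₁ ht₁ w₁]

/- ### Commutation of push and pull -/

lemma t_comm (h23 : TwoOutOfThree S) {Cc' Cc A A' : D} (c : Cc' ⟶ Cc) (a : A ⟶ A')
    (x : Quot (TripletRel S T Cc A)) :
    tpull h23 c A' (tpush h23 Cc a x) = tpush h23 Cc' a (tpull h23 c A x) := by
  induction x using Quot.ind with
  | _ Tr =>
    obtain ⟨X', f, s', hs', w⟩ := lfill Tr.hs a
    obtain ⟨Z', g, t', ht', w'⟩ := rfill Tr.ht c
    calc tpull h23 c A' (tpush h23 Cc a (Quot.mk _ Tr))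
        = tpull h23 c A' (Quot.mk _ ⟨Tr.Z, X', Tr.t, s', Tr.ht, hs', T.push f Tr.δ⟩) := by
          rw [tpush_mk h23 a Tr f s' hs' w]
      _ = Quot.mk _ ⟨Z', X', t', s', ht', hs', T.pull g (T.push f Tr.δ)⟩ :=
          tpull_mk h23 c ⟨Tr.Z, X', Tr.t, s', Tr.ht, hs', T.push f Tr.δ⟩ g t' ht' w'
      _ = Quot.mk _ ⟨Z', X', t', s', ht', hs', T.push f (T.pull g Tr.δ)⟩ := by
          rw [T.pull_push]
      _ = tpush h23 Cc' a (Quot.mk _ ⟨Z', Tr.X, t', Tr.s, ht', Tr.hs, T.pull g Tr.δ⟩) :=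
          (tpush_mk h23 a ⟨Z', Tr.X, t', Tr.s, ht', Tr.hs, T.pull g Tr.δ⟩ f s' hs' w).symm
      _ = tpush h23 Cc' a (tpull h23 c A (Quot.mk _ Tr)) := by
          rw [tpull_mk h23 c Tr g t' ht' w']

/- ### Compatibility with μ -/

lemma tpush_mu (h23 : TwoOutOfThree S) (Cc : D) {A A' : D} (a : A ⟶ A') (δ : T.E Cc A) :
    tpush h23 Cc a (muMap S T Cc A δ) = muMap S T Cc A' (T.push a δ) :=
  tpush_mk h23 a ⟨Cc, A, 𝟙 Cc, 𝟙 A, S.id_mem Cc, S.id_mem A, δ⟩ a (𝟙 A') (S.id_mem A')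
    (by simp)

lemma tpull_mu (h23 : TwoOutOfThree S) {Cc' Cc : D} (c : Cc' ⟶ Cc) (A : D) (δ : T.E Cc A) :
    tpull h23 c A (muMap S T Cc A δ) = muMap S T Cc' A (T.pull c δ) :=
  tpull_mk h23 c ⟨Cc, A, 𝟙 Cc, 𝟙 A, S.id_mem Cc, S.id_mem A, δ⟩ c (𝟙 Cc') (S.id_mem Cc')
    (by simp)

/- ### Bijectivity -/

lemma tpush_bij (h23 : TwoOutOfThree S) (Cc : D) {A A' : D} (u : A ⟶ A') (hu : S u) :
    Function.Bijective (tpush h23 Cc u (T := T)) := by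
  rw [Function.bijective_iff_has_inverse]
  refine ⟨Quot.lift (fun Tr => Quot.mk _
      ⟨Tr.Z, Tr.X, Tr.t, u ≫ Tr.s, Tr.ht, S.comp_mem _ _ hu Tr.hs, Tr.δ⟩) ?_, ?_, ?_⟩
  · intro T₁ T₂ h
    obtain ⟨Z, X, t, s, u₁, v₁, u₂, v₂, hT, hS, hu₁, hv₁, hu₂, hv₂, e₁, e₂, e₃, e₄, key⟩ := h
    apply Quot.sound
    exact ⟨Z, X, t, u ≫ s, u₁, v₁, u₂, v₂, hT, S.comp_mem _ _ hu hS,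
      hu₁, hv₁, hu₂, hv₂, (by rw [e₁, Category.assoc]), (by rw [e₂, Category.assoc]),
      e₃, e₄, key⟩
  · intro x
    induction x using Quot.ind with
    | _ Tr =>
      have L := lfill Tr.hs u
      have hLf : S L.f := h23.2.1 Tr.s L.f Tr.hs
        (by rw [← L.w]; exact S.comp_mem _ _ hu L.hs')
      rw [tpush_mk h23 u Tr L.f L.s' L.hs' L.w]
      apply Quot.sound
      refine ⟨Tr.Z, L.X', Tr.t, Tr.s ≫ L.f, 𝟙 _, 𝟙 _, L.f, 𝟙 _,
        Tr.ht, S.comp_mem _ _ Tr.hs hLf, S.id_mem _, S.id_mem _, hLf, S.id_mem _,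
        ?_, ?_, ?_, ?_, ?_⟩
      · show Tr.s ≫ L.f = (u ≫ L.s') ≫ 𝟙 _
        rw [Category.comp_id, L.w]
      · show Tr.s ≫ L.f = Tr.s ≫ L.f
        rfl
      · show Tr.t = 𝟙 _ ≫ Tr.t
        rw [Category.id_comp]
      · show Tr.t = 𝟙 _ ≫ Tr.t
        rw [Category.id_comp]
      · show T.pull (𝟙 Tr.Z) (T.push (𝟙 L.X') (T.push L.f Tr.δ))
          = T.pull (𝟙 Tr.Z) (T.push L.f Tr.δ)
        rw [T.push_id, T.pull_id]
  · intro x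
    induction x using Quot.ind with
    | _ Tr =>
      show tpush h23 Cc u (Quot.mk _
        ⟨Tr.Z, Tr.X, Tr.t, u ≫ Tr.s, Tr.ht, S.comp_mem _ _ hu Tr.hs, Tr.δ⟩) = Quot.mk _ Tr
      rw [tpush_mk h23 u ⟨Tr.Z, Tr.X, Tr.t, u ≫ Tr.s, Tr.ht, S.comp_mem _ _ hu Tr.hs, Tr.δ⟩
        (𝟙 Tr.X) Tr.s Tr.hs (Category.comp_id _).symm, T.push_id]

lemma tpull_bij (h23 : TwoOutOfThree S) {Cc' Cc : D} (v : Cc' ⟶ Cc) (hv : S v) (A : D) :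
    Function.Bijective (tpull h23 v A (T := T)) := by
  rw [Function.bijective_iff_has_inverse]
  refine ⟨Quot.lift (fun Tr => Quot.mk _
      ⟨Tr.Z, Tr.X, Tr.t ≫ v, Tr.s, S.comp_mem _ _ Tr.ht hv, Tr.hs, Tr.δ⟩) ?_, ?_, ?_⟩
  · intro T₁ T₂ h
    obtain ⟨Z, X, t, s, u₁, v₁, u₂, v₂, hT, hS, hu₁, hv₁, hu₂, hv₂, e₁, e₂, e₃, e₄, key⟩ := h
    apply Quot.sound
    exact ⟨Z, X, t ≫ v, s, u₁, v₁, u₂, v₂, S.comp_mem _ _ hT hv, hS,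
      hu₁, hv₁, hu₂, hv₂, e₁, e₂,
      (by rw [e₃, Category.assoc]), (by rw [e₄, Category.assoc]), key⟩
  · intro x
    induction x using Quot.ind with
    | _ Tr =>
      have R := rfill Tr.ht v
      have hRg : S R.g := h23.2.2 R.g Tr.t Tr.ht
        (by rw [← R.w]; exact S.comp_mem _ _ R.ht' hv)
      rw [tpull_mk h23 v Tr R.g R.t' R.ht' R.w]
      apply Quot.sound
      refine ⟨R.Z', Tr.X, R.g ≫ Tr.t, Tr.s, 𝟙 _, 𝟙 _, 𝟙 _, R.g,
        S.comp_mem _ _ hRg Tr.ht, Tr.hs, S.id_mem _, S.id_mem _, S.id_mem _, hRg,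
        ?_, ?_, ?_, ?_, ?_⟩
      · show Tr.s = Tr.s ≫ 𝟙 _
        rw [Category.comp_id]
      · show Tr.s = Tr.s ≫ 𝟙 _
        rw [Category.comp_id]
      · show R.g ≫ Tr.t = 𝟙 _ ≫ (R.t' ≫ v)
        rw [Category.id_comp, R.w]
      · show R.g ≫ Tr.t = R.g ≫ Tr.t
        rfl
      · show T.pull (𝟙 R.Z') (T.push (𝟙 Tr.X) (T.pull R.g Tr.δ))
          = T.pull R.g (T.push (𝟙 Tr.X) Tr.δ)
        rw [T.push_id, T.pull_id, T.push_id]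
  · intro x
    induction x using Quot.ind with
    | _ Tr =>
      show tpull h23 v A (Quot.mk _
        ⟨Tr.Z, Tr.X, Tr.t ≫ v, Tr.s, S.comp_mem _ _ Tr.ht hv, Tr.hs, Tr.δ⟩) = Quot.mk _ Tr
      rw [tpull_mk h23 v ⟨Tr.Z, Tr.X, Tr.t ≫ v, Tr.s, S.comp_mem _ _ Tr.ht hv, Tr.hs, Tr.δ⟩
        (𝟙 Tr.Z) Tr.t Tr.ht (Category.id_comp _).symm, T.pull_id]

/- ### Injectivity of μ -/

lemma mu_inj (h23 : TwoOutOfThree S)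
    (hsat : ∀ {Z' Z X X' : D} (u : X ⟶ X') (v : Z' ⟶ Z) (δ : T.E Z X),
      S u → S v → T.pull v (T.push u δ) = 0 → δ = 0)
    (Cc A : D) : Function.Injective (muMap S T Cc A) := by
  intro δ δ' h
  have h' : Quot.mk (TripletRel S T Cc A) ⟨Cc, A, 𝟙 Cc, 𝟙 A, S.id_mem Cc, S.id_mem A, δ⟩
      = Quot.mk (TripletRel S T Cc A) ⟨Cc, A, 𝟙 Cc, 𝟙 A, S.id_mem Cc, S.id_mem A, δ'⟩ := h
  obtain ⟨Z, X, t, s, u₁, v₁, u₂, v₂, hT, hS, hu₁, hv₁, hu₂, hv₂, e₁, e₂, e₃, e₄, key⟩ :=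
    (mk_eq_iff h23).mp h'
  dsimp only at e₁ e₂ e₃ e₄ key
  rw [Category.id_comp] at e₁ e₂
  rw [Category.comp_id] at e₃ e₄
  rw [← e₁, ← e₂, ← e₃, ← e₄] at key
  have h0 : T.pull t (T.push s (δ - δ')) = 0 := by
    rw [push_sub, pull_sub, key, sub_self]
  exact sub_eq_zero.mp (hsat s t (δ - δ') hS hT h0)

/- ### Addition -/

structure CP (S : MorphismProperty D) (T : AddBifunctor D) (Cc A : D)
    (x y : Quot (TripletRel S T Cc A)) where
  Z : D
  X : D
  t : Z ⟶ Cc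
  s : A ⟶ X
  ht : S t
  hs : S s
  ρ₁ : T.E Z X
  ρ₂ : T.E Z X
  hx : x = Quot.mk _ ⟨Z, X, t, s, ht, hs, ρ₁⟩
  hy : y = Quot.mk _ ⟨Z, X, t, s, ht, hs, ρ₂⟩

noncomputable def addQ (S : MorphismProperty D) (T : AddBifunctor D) (Cc A : D)
    (x y : Quot (TripletRel S T Cc A)) : Quot (TripletRel S T Cc A) :=
  @dite _ (Nonempty (CP S T Cc A x y)) (Classical.propDecidable _)
    (fun h => Quot.mk _ ⟨h.some.Z, h.some.X, h.some.t, h.some.s, h.some.ht, h.some.hs,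
      h.some.ρ₁ + h.some.ρ₂⟩)
    (fun _ => x)

lemma addQ_mk (h23 : TwoOutOfThree S) (Cc A : D) (Z X : D) (t : Z ⟶ Cc) (s : A ⟶ X)
    (ht : S t) (hs : S s) (ρ₁ ρ₂ : T.E Z X) :
    addQ S T Cc A (Quot.mk _ ⟨Z, X, t, s, ht, hs, ρ₁⟩) (Quot.mk _ ⟨Z, X, t, s, ht, hs, ρ₂⟩)
      = Quot.mk _ ⟨Z, X, t, s, ht, hs, ρ₁ + ρ₂⟩ := by
  have hne : Nonempty (CP S T Cc A (Quot.mk _ ⟨Z, X, t, s, ht, hs, ρ₁⟩)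
      (Quot.mk _ ⟨Z, X, t, s, ht, hs, ρ₂⟩)) := ⟨⟨Z, X, t, s, ht, hs, ρ₁, ρ₂, rfl, rfl⟩⟩
  unfold addQ
  rw [dif_pos hne]
  have h₁ := (mk_eq_iff (T := T) h23).mp hne.some.hx.symm
  have h₂ := (mk_eq_iff (T := T) h23).mp hne.some.hy.symm
  exact Quot.sound (rel_add h23 h₁ h₂)

end MuProof


/-- The assignment `δ ↦ [id \ δ / id]` defines an injective additive map
`μ_{C,A} : E(C, A) → Ẽ(C, A)`, natural in both variables: `Ẽ` carries
pushforward and pullback operations (functorial, inverting `S`, hence defined on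
the localization `D[S⁻¹]`) compatible with those of `E` via `μ`, so that `μ`
is a natural transformation `E ⇒ Ẽ ∘ (Qᵒᵖ × Q)`. -/
theorem mu_injective_natural (S : MorphismProperty D)
    [S.HasLeftCalculusOfFractions] [S.HasRightCalculusOfFractions]
    (h23 : TwoOutOfThree S) (T : AddBifunctor D)
    (hsat : ∀ {Z' Z X X' : D} (u : X ⟶ X') (v : Z' ⟶ Z) (δ : T.E Z X),
      S u → S v → T.pull v (T.push u δ) = 0 → δ = 0) :
    (∀ Cc A : D, Function.Injective (muMap S T Cc A)) ∧
    (∀ (Cc A : D) (δ δ' : T.E Cc A),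
      ∃ add : Quot (TripletRel S T Cc A) → Quot (TripletRel S T Cc A) →
          Quot (TripletRel S T Cc A),
        (∀ (Z X : D) (t : Z ⟶ Cc) (s : A ⟶ X) (ht : S t) (hs : S s)
            (ρ₁ ρ₂ : T.E Z X),
          add (Quot.mk _ ⟨Z, X, t, s, ht, hs, ρ₁⟩)
              (Quot.mk _ ⟨Z, X, t, s, ht, hs, ρ₂⟩)
            = Quot.mk _ ⟨Z, X, t, s, ht, hs, ρ₁ + ρ₂⟩) ∧
        muMap S T Cc A (δ + δ') = add (muMap S T Cc A δ) (muMap S T Cc A δ')) ∧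
    ∃ (tpush : ∀ (Cc : D) {A A' : D}, (A ⟶ A') →
        Quot (TripletRel S T Cc A) → Quot (TripletRel S T Cc A'))
      (tpull : ∀ {Cc' Cc : D}, (Cc' ⟶ Cc) → ∀ (A : D),
        Quot (TripletRel S T Cc A) → Quot (TripletRel S T Cc' A)),
      (∀ (Cc A : D) (x : Quot (TripletRel S T Cc A)), tpush Cc (𝟙 A) x = x) ∧
      (∀ (Cc : D) {A A' A'' : D} (a : A ⟶ A') (b : A' ⟶ A'')
          (x : Quot (TripletRel S T Cc A)),
        tpush Cc (a ≫ b) x = tpush Cc b (tpush Cc a x)) ∧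
      (∀ (Cc A : D) (x : Quot (TripletRel S T Cc A)), tpull (𝟙 Cc) A x = x) ∧
      (∀ {Cc'' Cc' Cc : D} (d : Cc'' ⟶ Cc') (c : Cc' ⟶ Cc) (A : D)
          (x : Quot (TripletRel S T Cc A)),
        tpull (d ≫ c) A x = tpull d A (tpull c A x)) ∧
      (∀ (Cc : D) {A A' : D} (u : A ⟶ A'), S u → Function.Bijective (tpush Cc u)) ∧
      (∀ {Cc' Cc : D} (v : Cc' ⟶ Cc), S v → ∀ A : D,
        Function.Bijective (fun x => tpull v A x)) ∧
      (∀ {Cc' Cc A A' : D} (c : Cc' ⟶ Cc) (a : A ⟶ A')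
          (x : Quot (TripletRel S T Cc A)),
        tpull c A' (tpush Cc a x) = tpush Cc' a (tpull c A x)) ∧
      (∀ (Cc : D) {A A' : D} (a : A ⟶ A') (δ : T.E Cc A),
        tpush Cc a (muMap S T Cc A δ) = muMap S T Cc A' (T.push a δ)) ∧
      (∀ {Cc' Cc : D} (c : Cc' ⟶ Cc) (A : D) (δ : T.E Cc A),
        tpull c A (muMap S T Cc A δ) = muMap S T Cc' A (T.pull c δ)) := by
  refine ⟨MuProof.mu_inj h23 hsat, ?_, ?_⟩
  · intro Cc A δ δ'
    exact ⟨MuProof.addQ S T Cc A,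
      fun Z X t s ht hs ρ₁ ρ₂ => MuProof.addQ_mk h23 Cc A Z X t s ht hs ρ₁ ρ₂,
      (MuProof.addQ_mk h23 Cc A Cc A (𝟙 Cc) (𝟙 A) (S.id_mem Cc) (S.id_mem A) δ δ').symm⟩
  · exact ⟨MuProof.tpush h23, MuProof.tpull h23,
      MuProof.tpush_id h23, MuProof.tpush_comp h23,
      MuProof.tpull_id h23, MuProof.tpull_comp h23,
      MuProof.tpush_bij h23, MuProof.tpull_bij h23,
      MuProof.t_comm h23, MuProof.tpush_mu h23, MuProof.tpull_mu h23⟩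
end
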